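/- arXiv:2306.08288 — 5 statements merged into one kernel-verified Lean document; each statement's English description precedes it below -/
import Mathlib

section
/- (Theorem 1, Symmetry of Redundant Information, for the ordering Q ⊏ X iff H[Q|X] = 0, with all system variables as sources.) Let X₁, …, X_n (n ≥ 1) be measurable functions Ω → ℕ with finite range on a probability space (Ω, μ). For each index i, define R_i := sSup { I[Q : X_i] | Q : Ω → ℕ measurable with finite range and H[Q | X_j] = 0 for every j ∈ {1,…,n} }. Then R_i = R_k for all indices i, k, and moreover R_i = sSup { H[Q] | Q : Ω → ℕ measurable with finite range and H[Q | X_j] = 0 for every j ∈ {1,…,n} }. In particular, the redundant information of the system does not depend on which variable is designated as the target. -/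
open MeasureTheory ProbabilityTheory Real

/-- Shannon entropy (natural logarithm) of a random variable `X : Ω → S`:
`H[X] = ∑ₓ -P(X = x) log P(X = x)`. -/
noncomputable def entropy {Ω S : Type*} [MeasurableSpace Ω] [MeasurableSpace S]
    (μ : Measure Ω) (X : Ω → S) : ℝ :=
  ∑' x : S, Real.negMulLog (μ (X ⁻¹' {x})).toReal

/-- Conditional Shannon entropy `H[X|Y] = ∑_y P(Y = y) · H[X ; μ conditioned on Y = y]`. -/
noncomputable def condEntropy {Ω S T : Type*} [MeasurableSpace Ω] [MeasurableSpace S]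
    [MeasurableSpace T] (μ : Measure Ω) (X : Ω → S) (Y : Ω → T) : ℝ :=
  ∑' y : T, (μ (Y ⁻¹' {y})).toReal * entropy (μ[|Y ⁻¹' {y}]) X

/-- Mutual information `I[X:Y] = H[X] + H[Y] − H[⟨X,Y⟩]`. -/
noncomputable def mutualInfo {Ω S T : Type*} [MeasurableSpace Ω] [MeasurableSpace S]
    [MeasurableSpace T] (μ : Measure Ω) (X : Ω → S) (Y : Ω → T) : ℝ :=
  entropy μ X + entropy μ Y - entropy μ (fun ω => (X ω, Y ω))

/-- Conditional mutual information
`I[X:Y|Z] = H[⟨X,Z⟩] + H[⟨Y,Z⟩] − H[⟨⟨X,Y⟩,Z⟩] − H[Z]`. -/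
noncomputable def condMutualInfo {Ω S T W : Type*} [MeasurableSpace Ω] [MeasurableSpace S]
    [MeasurableSpace T] [MeasurableSpace W] (μ : Measure Ω)
    (X : Ω → S) (Y : Ω → T) (Z : Ω → W) : ℝ :=
  entropy μ (fun ω => (X ω, Z ω)) + entropy μ (fun ω => (Y ω, Z ω))
    - entropy μ (fun ω => ((X ω, Y ω), Z ω)) - entropy μ Z

set_option linter.unusedSectionVars false

section Aux

variable {Ω : Type*} [MeasurableSpace Ω]

lemma summable_of_support_finite {α : Type*} {f : α → ℝ} {s : Set α} (hs : s.Finite)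
    (h : ∀ x ∉ s, f x = 0) : Summable f :=
  summable_of_ne_finset_zero (s := hs.toFinset) (fun x hx => h x (by simpa using hx))

lemma term_nonneg (μ : Measure Ω) [IsProbabilityMeasure μ] (Q : Ω → ℕ) (q : ℕ) :
    0 ≤ negMulLog (μ (Q ⁻¹' {q})).toReal := by
  refine negMulLog_nonneg ENNReal.toReal_nonneg ?_
  have := prob_le_one (μ := μ) (s := Q ⁻¹' {q})
  simpa using ENNReal.toReal_mono (by simp) this

lemma entropy_nonneg' (μ : Measure Ω) [IsProbabilityMeasure μ] (Q : Ω → ℕ) :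
    0 ≤ entropy μ Q :=
  tsum_nonneg (fun q => term_nonneg μ Q q)

lemma preimage_empty_of_not_mem_range {Q : Ω → ℕ} {q : ℕ} (h : q ∉ Set.range Q) :
    Q ⁻¹' {q} = ∅ := by
  ext ω; simp only [Set.mem_preimage, Set.mem_singleton_iff, Set.mem_empty_iff_false, iff_false]
  exact fun h' => h ⟨ω, h'⟩

/-- If entropy of a finite-range r.v. under a probability measure is zero,
the r.v. is a.s. constant. -/
lemma exists_measure_one (μ : Measure Ω) [IsProbabilityMeasure μ]
    {Q : Ω → ℕ} (hQ : Measurable Q) (hQf : (Set.range Q).Finite)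
    (h : entropy μ Q = 0) : ∃ q, μ (Q ⁻¹' {q}) = 1 := by
  set f : ℕ → ℝ := fun q => negMulLog (μ (Q ⁻¹' {q})).toReal with hf
  have hsupp : ∀ q ∉ Set.range Q, f q = 0 := by
    intro q hq
    simp [hf, preimage_empty_of_not_mem_range hq]
  have hsum : Summable f := summable_of_support_finite hQf hsupp
  have hzero : ∀ q, f q = 0 := by
    intro q
    refine le_antisymm ?_ (term_nonneg μ Q q)
    have := Summable.le_tsum hsum q (fun j _ => term_nonneg μ Q j)
    rwa [show (∑' q, f q) = 0 from h] at this
  have hmeas01 : ∀ q, μ (Q ⁻¹' {q}) = 0 ∨ μ (Q ⁻¹' {q}) = 1 := by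
    intro q
    have hne : μ (Q ⁻¹' {q}) ≠ ⊤ := measure_ne_top μ _
    have hp := hzero q
    simp only [hf, negMulLog, neg_mul, neg_eq_zero, mul_eq_zero] at hp
    rcases hp with h0 | hlog
    · left; exact ((ENNReal.toReal_eq_zero_iff _).1 h0).resolve_right hne
    · rcases Real.log_eq_zero.1 hlog with h0 | h1 | hneg
      · left; exact ((ENNReal.toReal_eq_zero_iff _).1 h0).resolve_right hne
      · right; exact (ENNReal.toReal_eq_one_iff _).1 h1
      · exfalso
        have : (0:ℝ) ≤ (μ (Q ⁻¹' {q})).toReal := ENNReal.toReal_nonneg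
        linarith
  by_contra hcon
  push_neg at hcon
  have hall0 : ∀ q, μ (Q ⁻¹' {q}) = 0 := fun q => (hmeas01 q).resolve_right (hcon q)
  have htot : (∑' q : ℕ, μ (Q ⁻¹' {q})) = 1 := by
    rw [← measure_iUnion (fun i j hij => Set.disjoint_left.2 (fun ω h1 h2 => by
        simp only [Set.mem_preimage, Set.mem_singleton_iff] at h1 h2; exact hij (h1.symm.trans h2)))
      (fun q => hQ (measurableSet_singleton q))]
    have : (⋃ q, Q ⁻¹' {q}) = Set.univ := by ext ω; simp
    rw [this]; exact measure_univ
  simp [hall0] at htot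

lemma pair_preimage (Q X : Ω → ℕ) (q x : ℕ) :
    (fun ω => (Q ω, X ω)) ⁻¹' {(q, x)} = Q ⁻¹' {q} ∩ X ⁻¹' {x} := by
  ext ω; simp [Prod.ext_iff]

/-- Chain-rule special case: if `H[Q|X] = 0` then `H[(Q,X)] = H[X]`. -/
lemma joint_entropy_eq (μ : Measure Ω) [IsProbabilityMeasure μ]
    {Q X : Ω → ℕ} (hQ : Measurable Q) (hQf : (Set.range Q).Finite)
    (hXm : Measurable X) (hXf : (Set.range X).Finite)
    (h : condEntropy μ Q X = 0) :
    entropy μ (fun ω => (Q ω, X ω)) = entropy μ X := by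
  -- Step A: conditional entropy terms vanish
  have hterm : ∀ x : ℕ, μ (X ⁻¹' {x}) ≠ 0 → entropy (μ[|X ⁻¹' {x}]) Q = 0 := by
    set f : ℕ → ℝ := fun x => (μ (X ⁻¹' {x})).toReal * entropy (μ[|X ⁻¹' {x}]) Q with hf
    have hnn : ∀ x, 0 ≤ f x := by
      intro x
      rcases eq_or_ne (μ (X ⁻¹' {x})) 0 with h0 | h0
      · simp [hf, h0]
      · haveI := cond_isProbabilityMeasure (μ := μ) h0
        exact mul_nonneg ENNReal.toReal_nonneg (entropy_nonneg' _ Q)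
    have hsupp : ∀ x ∉ Set.range X, f x = 0 := by
      intro x hx
      simp [hf, preimage_empty_of_not_mem_range (Q := X) hx]
    have hsum : Summable f := summable_of_support_finite hXf hsupp
    intro x hx0
    have hzero : f x = 0 := by
      refine le_antisymm ?_ (hnn x)
      have := Summable.le_tsum hsum x (fun j _ => hnn j)
      rwa [show (∑' x, f x) = 0 from h] at this
    have hpos : 0 < (μ (X ⁻¹' {x})).toReal :=
      ENNReal.toReal_pos hx0 (measure_ne_top μ _)
    have := mul_eq_zero.1 hzero
    rcases this with h' | h'
    · exact absurd h' (ne_of_gt hpos)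
    · exact h'
  -- Step B: for each x with positive measure, get the a.s. value of Q
  have hstep : ∀ x : ℕ, μ (X ⁻¹' {x}) ≠ 0 → ∃ qx : ℕ,
      μ (Q ⁻¹' {qx} ∩ X ⁻¹' {x}) = μ (X ⁻¹' {x}) ∧
      ∀ q ≠ qx, μ (Q ⁻¹' {q} ∩ X ⁻¹' {x}) = 0 := by
    intro x hx0
    haveI := cond_isProbabilityMeasure (μ := μ) hx0
    obtain ⟨qx, hqx⟩ := exists_measure_one (μ[|X ⁻¹' {x}]) hQ hQf (hterm x hx0)
    have hms : MeasurableSet (X ⁻¹' {x}) := hXm (measurableSet_singleton x)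
    have hne : μ (X ⁻¹' {x}) ≠ ⊤ := measure_ne_top μ _
    rw [cond_apply hms] at hqx
    have heq : μ (X ⁻¹' {x} ∩ Q ⁻¹' {qx}) = μ (X ⁻¹' {x}) := by
      have := congrArg (fun z => μ (X ⁻¹' {x}) * z) hqx
      simp only [mul_one] at this
      rwa [← mul_assoc, ENNReal.mul_inv_cancel hx0 hne, one_mul] at this
    refine ⟨qx, by rwa [Set.inter_comm], ?_⟩
    intro q hq
    have hsub : Q ⁻¹' {q} ∩ X ⁻¹' {x} ⊆ X ⁻¹' {x} \ (X ⁻¹' {x} ∩ Q ⁻¹' {qx}) := by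
      intro ω ⟨h1, h2⟩
      refine ⟨h2, fun ⟨_, h4⟩ => ?_⟩
      simp only [Set.mem_preimage, Set.mem_singleton_iff] at h1 h4
      exact hq (h1.symm.trans h4)
    refine le_antisymm (le_trans (measure_mono hsub) ?_) zero_le
    rw [measure_diff Set.inter_subset_left (hms.inter (hQ (measurableSet_singleton qx))).nullMeasurableSet
      (by rw [heq]; exact hne), heq, tsub_self]
  -- Step C: compute the joint entropy
  have hpre : ∀ p : ℕ × ℕ, ((fun ω => (Q ω, X ω)) ⁻¹' {p}) = Q ⁻¹' {p.1} ∩ X ⁻¹' {p.2} :=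
    fun p => pair_preimage Q X p.1 p.2
  set F : ℕ × ℕ → ℝ := fun p => negMulLog (μ (Q ⁻¹' {p.1} ∩ X ⁻¹' {p.2})).toReal with hF
  have hFsupp : ∀ p ∉ (Set.range Q) ×ˢ (Set.range X), F p = 0 := by
    intro p hp
    rcases not_and_or.1 (fun hc => hp (Set.mem_prod.2 hc)) with h' | h'
    · simp [hF, preimage_empty_of_not_mem_range h']
    · simp [hF, preimage_empty_of_not_mem_range (Q := X) h']
  have hFsum : Summable F := summable_of_support_finite (hQf.prod hXf) hFsupp
  have hswap : Summable (F ∘ Prod.swap) := by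
    refine summable_of_support_finite (hXf.prod hQf) ?_
    intro p hp
    refine hFsupp p.swap ?_
    rcases not_and_or.1 (fun hc => hp (Set.mem_prod.2 hc)) with h' | h' <;>
      simp [Set.mem_prod, Prod.swap] at * <;> tauto
  have hinner : ∀ x : ℕ, (∑' q : ℕ, F (q, x)) = negMulLog ((μ (X ⁻¹' {x})).toReal) := by
    intro x
    rcases eq_or_ne (μ (X ⁻¹' {x})) 0 with h0 | h0
    · have : ∀ q : ℕ, F (q, x) = 0 := by
        intro q
        have : μ (Q ⁻¹' {q} ∩ X ⁻¹' {x}) = 0 :=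
          measure_mono_null Set.inter_subset_right h0
        simp [hF, this]
      simp [this, h0]
    · obtain ⟨qx, hqx1, hqx2⟩ := hstep x h0
      rw [tsum_eq_single qx (fun q hq => by simp [hF, hqx2 q hq])]
      simp [hF, hqx1]
  calc entropy μ (fun ω => (Q ω, X ω))
      = ∑' p : ℕ × ℕ, F p := by
        unfold entropy; exact tsum_congr (fun p => by rw [hpre p])
    _ = ∑' p : ℕ × ℕ, F p.swap := by
        rw [← (Equiv.prodComm ℕ ℕ).tsum_eq F]; rfl
    _ = ∑' x : ℕ, ∑' q : ℕ, F (q, x) :=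
        Summable.tsum_prod' (f := fun p => F p.swap) hswap (fun x => hswap.prod_factor x)
    _ = ∑' x : ℕ, negMulLog ((μ (X ⁻¹' {x})).toReal) := tsum_congr hinner
    _ = entropy μ X := rfl

end Aux

/-- Symmetry of Redundant Information, ordering `Q ⊏ X ↔ H[Q|X] = 0`,
all system variables as sources: the quantity
`R_i := sSup {I[Q:X_i] | Q measurable with finite range, H[Q|X_j] = 0 for all j}`
does not depend on `i`, and equals `sSup {H[Q] | Q measurable with finite range,
H[Q|X_j] = 0 for all j}`. -/
theorem redundancy_symmetry {Ω : Type*} [MeasurableSpace Ω]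
    (μ : Measure Ω) [IsProbabilityMeasure μ]
    (n : ℕ) (hn : 1 ≤ n) (X : Fin n → Ω → ℕ)
    (hX : ∀ i, Measurable (X i)) (hXfin : ∀ i, (Set.range (X i)).Finite) :
    (∀ i k : Fin n,
      sSup {x : ℝ | ∃ Q : Ω → ℕ, Measurable Q ∧ (Set.range Q).Finite ∧
          (∀ j, condEntropy μ Q (X j) = 0) ∧ x = mutualInfo μ Q (X i)} =
        sSup {x : ℝ | ∃ Q : Ω → ℕ, Measurable Q ∧ (Set.range Q).Finite ∧
          (∀ j, condEntropy μ Q (X j) = 0) ∧ x = mutualInfo μ Q (X k)}) ∧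
    ∀ i : Fin n,
      sSup {x : ℝ | ∃ Q : Ω → ℕ, Measurable Q ∧ (Set.range Q).Finite ∧
          (∀ j, condEntropy μ Q (X j) = 0) ∧ x = mutualInfo μ Q (X i)} =
        sSup {x : ℝ | ∃ Q : Ω → ℕ, Measurable Q ∧ (Set.range Q).Finite ∧
          (∀ j, condEntropy μ Q (X j) = 0) ∧ x = entropy μ Q} := by
  have key : ∀ i : Fin n,
      {x : ℝ | ∃ Q : Ω → ℕ, Measurable Q ∧ (Set.range Q).Finite ∧
          (∀ j, condEntropy μ Q (X j) = 0) ∧ x = mutualInfo μ Q (X i)} =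
        {x : ℝ | ∃ Q : Ω → ℕ, Measurable Q ∧ (Set.range Q).Finite ∧
          (∀ j, condEntropy μ Q (X j) = 0) ∧ x = entropy μ Q} := by
    intro i
    have hmi : ∀ (Q : Ω → ℕ), Measurable Q → (Set.range Q).Finite →
        (∀ j, condEntropy μ Q (X j) = 0) → mutualInfo μ Q (X i) = entropy μ Q := by
      intro Q hm hf hc
      unfold mutualInfo
      rw [joint_entropy_eq μ hm hf (hX i) (hXfin i) (hc i)]
      ring
    ext x
    constructor
    · rintro ⟨Q, hm, hf, hc, rfl⟩
      exact ⟨Q, hm, hf, hc, hmi Q hm hf hc⟩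
    · rintro ⟨Q, hm, hf, hc, rfl⟩
      exact ⟨Q, hm, hf, hc, (hmi Q hm hf hc).symm⟩
  exact ⟨fun i k => by rw [key i, key k], fun i => by rw [key i]⟩
end

section
/- (Theorem 1, Step Two: redundancy with the union variable as target equals redundancy with Y as target, for the ordering Q ⊏ X iff H[Q|X] = 0.) Let Y and X₁, …, X_n be measurable functions Ω → ℕ with finite range on a probability space (Ω, μ), and let U := ⟨X₁, …, X_n, Y⟩ be the joint variable. Then sSup { I[Q : U] | Q : Ω → ℕ measurable with finite range, H[Q|Y] = 0 and H[Q|X_j] = 0 for all j } = sSup { I[Q : Y] | Q : Ω → ℕ measurable with finite range, H[Q|Y] = 0 and H[Q|X_j] = 0 for all j }, i.e. Red(U : X₁,…,X_n, Y) = Red(Y : X₁,…,X_n, Y). -/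
open MeasureTheory ProbabilityTheory Real

/-- If `Q = φ ∘ Z` a.e., then `H[⟨Q,Z⟩] = H[Z]`. -/
lemma entropy_pair_of_ae {Ω β : Type*} [MeasurableSpace Ω] [MeasurableSpace β]
    (μ : Measure Ω) {Q : Ω → ℕ} {Z : Ω → β} {φ : β → ℕ}
    (h : ∀ᵐ ω ∂μ, Q ω = φ (Z ω)) :
    entropy μ (fun ω => (Q ω, Z ω)) = entropy μ Z := by
  set N : Set Ω := {ω | ¬ Q ω = φ (Z ω)} with hN
  have hNnull : μ N = 0 := h
  have claim1 : ∀ z : β, μ ((fun ω => (Q ω, Z ω)) ⁻¹' {(φ z, z)}) = μ (Z ⁻¹' {z}) := by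
    intro z
    apply le_antisymm
    · apply measure_mono
      intro ω hω
      simp only [Set.mem_preimage, Set.mem_singleton_iff, Prod.mk.injEq] at hω ⊢
      exact hω.2
    · calc μ (Z ⁻¹' {z}) ≤ μ ((fun ω => (Q ω, Z ω)) ⁻¹' {(φ z, z)} ∪ N) := by
            apply measure_mono
            intro ω hω
            simp only [Set.mem_preimage, Set.mem_singleton_iff] at hω
            by_cases hq : Q ω = φ (Z ω)
            · left
              simp only [Set.mem_preimage, Set.mem_singleton_iff, Prod.mk.injEq]
              exact ⟨hω ▸ hq, hω⟩
            · right; exact hq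
        _ ≤ μ ((fun ω => (Q ω, Z ω)) ⁻¹' {(φ z, z)}) + μ N := measure_union_le _ _
        _ = μ ((fun ω => (Q ω, Z ω)) ⁻¹' {(φ z, z)}) := by rw [hNnull, add_zero]
  have claim2 : ∀ q : ℕ, ∀ z : β, q ≠ φ z → μ ((fun ω => (Q ω, Z ω)) ⁻¹' {(q, z)}) = 0 := by
    intro q z hqz
    refine measure_mono_null ?_ hNnull
    intro ω hω
    simp only [Set.mem_preimage, Set.mem_singleton_iff, Prod.mk.injEq] at hω
    intro hc
    exact hqz (hω.1 ▸ hω.2 ▸ hc)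
  show (∑' p : ℕ × β, Real.negMulLog (μ ((fun ω => (Q ω, Z ω)) ⁻¹' {p})).toReal)
      = ∑' z : β, Real.negMulLog (μ (Z ⁻¹' {z})).toReal
  set F : ℕ × β → ℝ := fun p => Real.negMulLog (μ ((fun ω => (Q ω, Z ω)) ⁻¹' {p})).toReal with hF
  set G : β → ℝ := fun z => Real.negMulLog (μ (Z ⁻¹' {z})).toReal with hG
  refine tsum_eq_tsum_of_ne_zero_bij (fun z => (φ z.1, z.1)) ?_ ?_ ?_
  · intro a b hab
    simp only [Prod.mk.injEq] at hab
    exact Subtype.ext hab.2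
  · intro p hp
    have hne : μ ((fun ω => (Q ω, Z ω)) ⁻¹' {p}) ≠ 0 := by
      intro h0
      apply hp
      simp only [hF, Function.mem_support, h0]
      simp
    have hpeq : p.1 = φ p.2 := by
      by_contra hc
      exact hne (claim2 p.1 p.2 hc)
    have hGne : G p.2 ≠ 0 := by
      simp only [hG]
      have := claim1 p.2
      rw [← hpeq] at this
      rw [← Prod.mk.eta (p := p)] at hne
      rw [this] at hne
      simp only [Function.mem_support, hF] at hp
      rw [← Prod.mk.eta (p := p), hpeq] at hp
      rw [claim1 p.2] at hp
      exact hp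
    exact ⟨⟨p.2, hGne⟩, by simp [← hpeq]⟩
  · intro z
    simp only [hF, hG, claim1 z.1]

/-- If `H[Q|Y] = 0`, there is `φ` with `Q = φ ∘ Y` a.e. -/
lemma exists_ae_fun {Ω : Type*} [MeasurableSpace Ω]
    (μ : Measure Ω) [IsProbabilityMeasure μ] {Q Y : Ω → ℕ}
    (hQ : Measurable Q) (hQfin : (Set.range Q).Finite)
    (hY : Measurable Y) (hYfin : (Set.range Y).Finite)
    (h : condEntropy μ Q Y = 0) :
    ∃ φ : ℕ → ℕ, ∀ᵐ ω ∂μ, Q ω = φ (Y ω) := by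
  -- entropy is nonnegative for measures bounded by 1
  have ent_nonneg : ∀ (ν : Measure Ω), (∀ s, ν s ≤ 1) → 0 ≤ entropy ν Q := by
    intro ν hν
    apply tsum_nonneg
    intro q
    apply Real.negMulLog_nonneg ENNReal.toReal_nonneg
    exact ENNReal.toReal_le_of_le_ofReal one_pos.le (by simpa using hν (Q ⁻¹' {q}))
  have key : ∀ y : ℕ, ∃ q : ℕ, μ (Y ⁻¹' {y} ∩ (Q ⁻¹' {q})ᶜ) = 0 := by
    intro y
    by_cases hy : μ (Y ⁻¹' {y}) = 0
    · exact ⟨0, measure_mono_null Set.inter_subset_left hy⟩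
    · -- conditional measure is a probability measure
      haveI hprob : IsProbabilityMeasure (μ[|Y ⁻¹' {y}]) := cond_isProbabilityMeasure hy
      set ν := μ[|Y ⁻¹' {y}] with hν
      -- each term of condEntropy is nonneg; total is 0; so this term is 0
      set T : ℕ → ℝ := fun y' => (μ (Y ⁻¹' {y'})).toReal * entropy (μ[|Y ⁻¹' {y'}]) Q with hT
      have hTnonneg : ∀ y', 0 ≤ T y' := by
        intro y'
        by_cases hy' : μ (Y ⁻¹' {y'}) = 0
        · simp [hT, hy']
        · haveI : IsProbabilityMeasure (μ[|Y ⁻¹' {y'}]) := cond_isProbabilityMeasure hy'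
          exact mul_nonneg ENNReal.toReal_nonneg
            (ent_nonneg _ (fun s => prob_le_one))
      have hTsum : Summable T := by
        apply summable_of_ne_finset_zero (s := hYfin.toFinset)
        intro y' hy'
        have : Y ⁻¹' {y'} = ∅ := by
          ext ω; simp only [Set.mem_preimage, Set.mem_singleton_iff, Set.mem_empty_iff_false,
            iff_false]
          intro hc
          exact hy' (by simpa [hYfin] using hc ▸ Set.mem_range_self ω)
        simp [hT, this]
      have hTy : T y = 0 := le_antisymm (h ▸ Summable.le_tsum hTsum y (fun j _ => hTnonneg j)) (hTnonneg y)
      have hEnt : entropy ν Q = 0 := by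
        have hpos : 0 < (μ (Y ⁻¹' {y})).toReal :=
          ENNReal.toReal_pos hy (measure_ne_top μ _)
        rcases mul_eq_zero.mp hTy with h1 | h1
        · exact absurd h1 hpos.ne'
        · exact h1
      -- each term of entropy ν Q is zero
      set E : ℕ → ℝ := fun q => Real.negMulLog (ν (Q ⁻¹' {q})).toReal with hE
      have hEnonneg : ∀ q, 0 ≤ E q := by
        intro q
        apply Real.negMulLog_nonneg ENNReal.toReal_nonneg
        calc (ν (Q ⁻¹' {q})).toReal ≤ (1 : ENNReal).toReal :=
              ENNReal.toReal_mono ENNReal.one_ne_top prob_le_one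
          _ = 1 := by simp
      have hEsum : Summable E := by
        apply summable_of_ne_finset_zero (s := hQfin.toFinset)
        intro q hq
        have : Q ⁻¹' {q} = ∅ := by
          ext ω; simp only [Set.mem_preimage, Set.mem_singleton_iff, Set.mem_empty_iff_false,
            iff_false]
          intro hc
          exact hq (by simpa [hQfin] using hc ▸ Set.mem_range_self ω)
        simp [hE, this]
      have hEzero : ∀ q, E q = 0 := fun q =>
        le_antisymm (hEnt ▸ Summable.le_tsum hEsum q (fun j _ => hEnonneg j)) (hEnonneg q)
      -- each ν (Q ⁻¹' {q}) is 0 or 1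
      have hval : ∀ q, ν (Q ⁻¹' {q}) = 0 ∨ ν (Q ⁻¹' {q}) = 1 := by
        intro q
        have hq := hEzero q
        simp only [hE, Real.negMulLog, neg_mul, neg_eq_zero, mul_eq_zero] at hq
        rcases hq with h1 | h1
        · left
          exact (ENNReal.toReal_eq_zero_iff _).mp h1 |>.resolve_right (measure_ne_top ν _)
        · rcases Real.log_eq_zero.mp h1 with h2 | h2 | h2
          · left
            exact (ENNReal.toReal_eq_zero_iff _).mp h2 |>.resolve_right (measure_ne_top ν _)
          · right
            exact (ENNReal.toReal_eq_one_iff _).mp h2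
          · exfalso
            have := ENNReal.toReal_nonneg (a := ν (Q ⁻¹' {q}))
            linarith
      -- the total mass is 1
      have hsum1 : (∑' q : ℕ, ν (Q ⁻¹' {q})) = 1 := by
        have hU : (⋃ q : ℕ, Q ⁻¹' {q}) = Set.univ := by
          ext ω; simp
        rw [← measure_univ (μ := ν), ← hU, measure_iUnion]
        · intro i j hij
          apply Set.disjoint_left.mpr
          intro ω hi hj
          simp only [Set.mem_preimage, Set.mem_singleton_iff] at hi hj
          exact hij (hi ▸ hj ▸ rfl)
        · exact fun q => hQ (measurableSet_singleton q)
      -- so some q has full measure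
      have hex : ∃ q, ν (Q ⁻¹' {q}) = 1 := by
        by_contra hc
        push_neg at hc
        have hall0 : ∀ q, ν (Q ⁻¹' {q}) = 0 := fun q => (hval q).resolve_right (hc q)
        rw [tsum_congr hall0] at hsum1
        simp at hsum1
      obtain ⟨q, hq1⟩ := hex
      refine ⟨q, ?_⟩
      have hcompl : ν ((Q ⁻¹' {q})ᶜ) = 0 := by
        rw [measure_compl (hQ (measurableSet_singleton q)) (measure_ne_top ν _), hq1,
          measure_univ, tsub_self]
      rw [hν, cond_apply (hY (measurableSet_singleton y))] at hcompl
      rcases mul_eq_zero.mp hcompl with h1 | h1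
      · exact absurd (ENNReal.inv_eq_zero.mp h1) (measure_ne_top μ _)
      · exact h1
  choose φ hφ using key
  refine ⟨φ, ?_⟩
  have hNnull : μ (⋃ y : ℕ, Y ⁻¹' {y} ∩ (Q ⁻¹' {φ y})ᶜ) = 0 :=
    measure_iUnion_null (fun y => hφ y)
  refine measure_mono_null ?_ hNnull
  intro ω hω
  simp only [Set.mem_setOf_eq] at hω
  refine Set.mem_iUnion.mpr ⟨Y ω, ?_⟩
  exact ⟨rfl, fun hc => hω (by simpa using hc)⟩

/-- Theorem 1, Step Two: with `U := ⟨X₁,…,X_n,Y⟩` the joint variable,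
`Red(U : X₁,…,X_n,Y) = Red(Y : X₁,…,X_n,Y)` for the ordering `Q ⊏ X ↔ H[Q|X] = 0`. -/
theorem redundancy_union_target {Ω : Type*} [MeasurableSpace Ω]
    (μ : Measure Ω) [IsProbabilityMeasure μ]
    (n : ℕ) (Y : Ω → ℕ) (X : Fin n → Ω → ℕ)
    (hY : Measurable Y) (hYfin : (Set.range Y).Finite)
    (hX : ∀ i, Measurable (X i)) (hXfin : ∀ i, (Set.range (X i)).Finite)
    (U : Ω → (Fin n → ℕ) × ℕ) (hU : U = fun ω => (fun j => X j ω, Y ω)) :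
    sSup {x : ℝ | ∃ Q : Ω → ℕ, Measurable Q ∧ (Set.range Q).Finite ∧
        condEntropy μ Q Y = 0 ∧ (∀ j, condEntropy μ Q (X j) = 0) ∧
        x = mutualInfo μ Q U} =
      sSup {x : ℝ | ∃ Q : Ω → ℕ, Measurable Q ∧ (Set.range Q).Finite ∧
        condEntropy μ Q Y = 0 ∧ (∀ j, condEntropy μ Q (X j) = 0) ∧
        x = mutualInfo μ Q Y} := by
  have key : ∀ Q : Ω → ℕ, Measurable Q → (Set.range Q).Finite → condEntropy μ Q Y = 0 →
      mutualInfo μ Q U = mutualInfo μ Q Y := by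
    intro Q hQ hQfin h0
    obtain ⟨φ, hφ⟩ := exists_ae_fun μ hQ hQfin hY hYfin h0
    have hQY : entropy μ (fun ω => (Q ω, Y ω)) = entropy μ Y :=
      entropy_pair_of_ae μ (φ := φ) hφ
    have hQU : entropy μ (fun ω => (Q ω, U ω)) = entropy μ U := by
      apply entropy_pair_of_ae μ (φ := φ ∘ Prod.snd)
      filter_upwards [hφ] with ω hω
      simp [hU, hω]
    simp only [mutualInfo, hQY, hQU]
    ring
  congr 1
  ext x
  constructor
  · rintro ⟨Q, hQ, hQfin, h1, h2, rfl⟩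
    exact ⟨Q, hQ, hQfin, h1, h2, key Q hQ hQfin h1⟩
  · rintro ⟨Q, hQ, hQfin, h1, h2, rfl⟩
    exact ⟨Q, hQ, hQfin, h1, h2, (key Q hQ hQfin h1).symm⟩
end

section
/- (Self-redundancy, Axiom 2, holds for the ordering Q ⊏ X iff H[Q|X] = 0.) Let X : Ω → ℕ and Y : Ω → ℕ be measurable functions with finite range on a probability space (Ω, μ). Then sSup { I[Q : Y] | Q : Ω → ℕ measurable with finite range and H[Q | X] = 0 } = I[X : Y]; that is, with a single source variable the redundant information equals the mutual information between source and target. -/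
open MeasureTheory ProbabilityTheory Real

section Aux
variable {Ω : Type*} [MeasurableSpace Ω] (μ : Measure Ω)

lemma entropy_eq_sum {α : Type*} [MeasurableSpace α] (Z : Ω → α) (s : Finset α)
    (hs : Set.range Z ⊆ ↑s) :
    entropy μ Z = ∑ x ∈ s, Real.negMulLog (μ (Z ⁻¹' {x})).toReal := by
  apply tsum_eq_sum
  intro x hx
  have h : Z ⁻¹' {x} = ∅ := by
    ext ω
    simp only [Set.mem_preimage, Set.mem_singleton_iff, Set.mem_empty_iff_false, iff_false]
    rintro rfl
    exact hx (hs (Set.mem_range_self ω))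
  simp [h]

lemma sum_measure_preimage_inter {α : Type*} [MeasurableSpace α] [MeasurableSingletonClass α]
    [IsFiniteMeasure μ]
    (Z : Ω → α) (hZ : Measurable Z) (s : Finset α) (hs : Set.range Z ⊆ ↑s)
    (t : Set Ω) (ht : MeasurableSet t) :
    ∑ x ∈ s, (μ (Z ⁻¹' {x} ∩ t)).toReal = (μ t).toReal := by
  have hU : ⋃ x ∈ s, (Z ⁻¹' {x} ∩ t) = t := by
    ext ω
    simp only [Set.mem_iUnion, Set.mem_inter_iff, Set.mem_preimage, Set.mem_singleton_iff]
    constructor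
    · rintro ⟨x, _, _, h⟩; exact h
    · intro h; exact ⟨Z ω, hs (Set.mem_range_self ω), rfl, h⟩
  rw [← ENNReal.toReal_sum (fun a _ => measure_ne_top μ _),
    ← measure_biUnion_finset ?_ (fun x _ => (hZ (measurableSet_singleton x)).inter ht), hU]
  intro x _ y _ hxy
  exact Set.disjoint_left.2 fun ω ⟨h1, _⟩ ⟨h2, _⟩ => hxy (h1.symm.trans h2)

lemma entropy_nonneg {α : Type*} [MeasurableSpace α] (ν : Measure Ω) [IsProbabilityMeasure ν]
    (Z : Ω → α) : 0 ≤ entropy ν Z := by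
  refine tsum_nonneg fun x => Real.negMulLog_nonneg ENNReal.toReal_nonneg ?_
  calc (ν (Z ⁻¹' {x})).toReal ≤ (ν Set.univ).toReal :=
        ENNReal.toReal_mono (measure_ne_top ν _) (measure_mono (Set.subset_univ _))
    _ = 1 := by simp

lemma gibbs {ι : Type*} (s : Finset ι) (p r : ι → ℝ)
    (hp : ∀ i ∈ s, 0 ≤ p i) (hr : ∀ i ∈ s, 0 ≤ r i)
    (habs : ∀ i ∈ s, r i = 0 → p i = 0)
    (hsum : ∑ i ∈ s, r i ≤ ∑ i ∈ s, p i) :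
    ∑ i ∈ s, p i * Real.log (r i) ≤ ∑ i ∈ s, p i * Real.log (p i) := by
  have key : ∀ i ∈ s, p i * Real.log (r i) - p i * Real.log (p i) ≤ r i - p i := by
    intro i hi
    rcases eq_or_lt_of_le (hp i hi) with h0 | h0
    · simp only [← h0, zero_mul, sub_zero, sub_self]
      exact hr i hi
    · have hrne : r i ≠ 0 := fun h => absurd (habs i hi h) (ne_of_gt h0)
      have hrpos : 0 < r i := (hr i hi).lt_of_ne (Ne.symm hrne)
      have hlog := Real.log_le_sub_one_of_pos (div_pos hrpos h0)
      have h1 : p i * Real.log (r i) - p i * Real.log (p i)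
          = p i * Real.log (r i / p i) := by
        rw [Real.log_div hrpos.ne' h0.ne', mul_sub]
      rw [h1]
      have h2 := mul_le_mul_of_nonneg_left hlog h0.le
      calc p i * Real.log (r i / p i) ≤ p i * (r i / p i - 1) := h2
        _ = r i - p i := by field_simp
  have hs2 := Finset.sum_le_sum key
  rw [Finset.sum_sub_distrib, Finset.sum_sub_distrib] at hs2
  linarith

end Aux

section Aux2
variable {Ω : Type*} [MeasurableSpace Ω] (μ : Measure Ω)

lemma condEntropy_self [IsProbabilityMeasure μ] (X : Ω → ℕ) (hX : Measurable X) :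
    condEntropy μ X X = 0 := by
  rw [condEntropy]
  have h : ∀ x : ℕ, (μ (X ⁻¹' {x})).toReal * entropy (μ[|X ⁻¹' {x}]) X = 0 := by
    intro x
    by_cases h0 : μ (X ⁻¹' {x}) = 0
    · rw [h0]; simp
    · have hent : entropy (μ[|X ⁻¹' {x}]) X = 0 := by
        rw [entropy]
        have hz : ∀ q : ℕ, Real.negMulLog ((μ[|X ⁻¹' {x}]) (X ⁻¹' {q})).toReal = 0 := by
          intro q
          by_cases hq : q = x
          · subst hq
            rw [cond_apply (hX (measurableSet_singleton q)), Set.inter_self,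
              ENNReal.inv_mul_cancel h0 (measure_ne_top μ _)]
            simp [Real.negMulLog]
          · have : X ⁻¹' {x} ∩ X ⁻¹' {q} = ∅ := by
              ext ω
              simp only [Set.mem_inter_iff, Set.mem_preimage, Set.mem_singleton_iff,
                Set.mem_empty_iff_false, iff_false, not_and]
              rintro rfl rfl; exact hq rfl
            rw [cond_apply (hX (measurableSet_singleton x)), this]
            simp
        rw [tsum_congr hz]; simp
      rw [hent, mul_zero]
  rw [tsum_congr h]; simp

lemma exists_eq_one_of_entropy_zero (ν : Measure Ω) [IsProbabilityMeasure ν]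
    (Q : Ω → ℕ) (hQ : Measurable Q) (hQfin : (Set.range Q).Finite)
    (h : entropy ν Q = 0) : ∃ q, ν (Q ⁻¹' {q}) = 1 := by
  classical
  set C := hQfin.toFinset with hC
  have hsub : Set.range Q ⊆ ↑C := by simp [hC]
  have hle1 : ∀ x : ℕ, (ν (Q ⁻¹' {x})).toReal ≤ 1 := by
    intro x
    calc (ν (Q ⁻¹' {x})).toReal ≤ (ν Set.univ).toReal :=
          ENNReal.toReal_mono (measure_ne_top ν _) (measure_mono (Set.subset_univ _))
      _ = 1 := by simp
  have hsum1 : ∑ x ∈ C, (ν (Q ⁻¹' {x})).toReal = 1 := by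
    have := sum_measure_preimage_inter ν Q hQ C hsub Set.univ MeasurableSet.univ
    simpa using this
  rw [entropy_eq_sum ν Q C hsub] at h
  have hterm : ∀ x ∈ C, Real.negMulLog (ν (Q ⁻¹' {x})).toReal = 0 :=
    (Finset.sum_eq_zero_iff_of_nonneg fun x _ =>
      Real.negMulLog_nonneg ENNReal.toReal_nonneg (hle1 x)).1 h
  by_contra hcon
  push_neg at hcon
  have hall : ∀ x ∈ C, (ν (Q ⁻¹' {x})).toReal = 0 := by
    intro x hx
    have h0 := hterm x hx
    rw [Real.negMulLog, neg_mul, neg_eq_zero, mul_eq_zero] at h0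
    rcases h0 with h0 | h0
    · exact h0
    · rcases Real.log_eq_zero.1 h0 with h1 | h1 | h1
      · exact h1
      · exact absurd (ENNReal.toReal_eq_one_iff _ |>.1 h1) (hcon x)
      · exact absurd h1 (by have := ENNReal.toReal_nonneg (a := ν (Q ⁻¹' {x})); intro hc; rw [hc] at this; linarith)
  rw [Finset.sum_eq_zero hall] at hsum1
  norm_num at hsum1

lemma measure_preimage_congr_ae {α : Type*} (Q Q' : Ω → α)
    (h : ∀ᵐ ω ∂μ, Q ω = Q' ω) (s : Set α) : μ (Q ⁻¹' s) = μ (Q' ⁻¹' s) := by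
  apply measure_congr
  filter_upwards [h] with ω hω
  show (Q ω ∈ s) = (Q' ω ∈ s)
  rw [hω]

lemma entropy_congr_ae {α : Type*} [MeasurableSpace α] (Q Q' : Ω → α)
    (h : ∀ᵐ ω ∂μ, Q ω = Q' ω) : entropy μ Q = entropy μ Q' := by
  refine tsum_congr fun x => ?_
  rw [measure_preimage_congr_ae μ Q Q' h]

lemma mutualInfo_congr_ae {α β : Type*} [MeasurableSpace α] [MeasurableSpace β]
    (Q Q' : Ω → α) (Y : Ω → β)
    (h : ∀ᵐ ω ∂μ, Q ω = Q' ω) : mutualInfo μ Q Y = mutualInfo μ Q' Y := by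
  rw [mutualInfo, mutualInfo, entropy_congr_ae μ Q Q' h,
    entropy_congr_ae μ (fun ω => (Q ω, Y ω)) (fun ω => (Q' ω, Y ω))
      (h.mono fun ω hω => by simp only [hω])]
end Aux2

section Aux3
variable {Ω : Type*} [MeasurableSpace Ω] (μ : Measure Ω) [IsProbabilityMeasure μ]

lemma exists_comp_ae (Q X : Ω → ℕ) (hQ : Measurable Q) (hX : Measurable X)
    (hQfin : (Set.range Q).Finite) (hXfin : (Set.range X).Finite)
    (h : condEntropy μ Q X = 0) :
    ∃ f : ℕ → ℕ, ∀ᵐ ω ∂μ, Q ω = f (X ω) := by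
  classical
  set A := hXfin.toFinset with hA
  have hsub : Set.range X ⊆ ↑A := by simp [hA]
  -- each conditional entropy vanishes
  have hentzero : ∀ x : ℕ, μ (X ⁻¹' {x}) ≠ 0 → entropy (μ[|X ⁻¹' {x}]) Q = 0 := by
    intro x hx0
    set g : ℕ → ℝ := fun x => (μ (X ⁻¹' {x})).toReal * entropy (μ[|X ⁻¹' {x}]) Q with hg
    have hgnn : ∀ x, 0 ≤ g x := by
      intro x
      by_cases h0 : μ (X ⁻¹' {x}) = 0
      · simp [hg, h0]
      · have : IsProbabilityMeasure (μ[|X ⁻¹' {x}]) := cond_isProbabilityMeasure h0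
        exact mul_nonneg ENNReal.toReal_nonneg (entropy_nonneg _ Q)
    have hzero : ∀ y ∉ A, g y = 0 := by
      intro y hy
      have : X ⁻¹' {y} = ∅ := by
        ext ω
        simp only [Set.mem_preimage, Set.mem_singleton_iff, Set.mem_empty_iff_false, iff_false]
        rintro rfl
        exact hy (hsub (Set.mem_range_self ω))
      simp [hg, this]
    have hsum : ∑ y ∈ A, g y = 0 := by
      rw [← tsum_eq_sum (L := SummationFilter.unconditional ℕ) hzero]; exact h
    have hxA : x ∈ A := by
      have : (X ⁻¹' {x}).Nonempty := by
        by_contra hc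
        exact hx0 (by rw [Set.not_nonempty_iff_eq_empty.1 hc]; simp)
      obtain ⟨ω, hω⟩ := this
      exact Finset.mem_coe.1 (hsub ⟨ω, hω⟩)
    have := (Finset.sum_eq_zero_iff_of_nonneg fun y _ => hgnn y).1 hsum x hxA
    have hpos : 0 < (μ (X ⁻¹' {x})).toReal := ENNReal.toReal_pos hx0 (measure_ne_top μ _)
    rcases mul_eq_zero.1 this with hc | hc
    · exact absurd hc hpos.ne'
    · exact hc
  have hchoice : ∀ x : ℕ, μ (X ⁻¹' {x}) ≠ 0 → ∃ q, (μ[|X ⁻¹' {x}]) (Q ⁻¹' {q}) = 1 := by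
    intro x hx0
    have : IsProbabilityMeasure (μ[|X ⁻¹' {x}]) := cond_isProbabilityMeasure hx0
    exact exists_eq_one_of_entropy_zero _ Q hQ hQfin (hentzero x hx0)
  set f : ℕ → ℕ := fun x => if h : μ (X ⁻¹' {x}) ≠ 0 then (hchoice x h).choose else 0 with hf
  refine ⟨f, ?_⟩
  rw [ae_iff]
  refine measure_mono_null (t := ⋃ x : ℕ, X ⁻¹' {x} ∩ (Q ⁻¹' {f x})ᶜ) ?_ ?_
  · intro ω hω
    simp only [Set.mem_setOf_eq] at hω
    refine Set.mem_iUnion.2 ⟨X ω, rfl, fun hc => hω ?_⟩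
    simpa using hc
  apply measure_iUnion_null
  intro x
  by_cases hx0 : μ (X ⁻¹' {x}) = 0
  · exact measure_mono_null Set.inter_subset_left hx0
  · have hspec := (hchoice x hx0).choose_spec
    have hfx : f x = (hchoice x hx0).choose := by rw [hf]; simp [hx0]
    rw [cond_apply (hX (measurableSet_singleton x))] at hspec
    have heq : μ (X ⁻¹' {x} ∩ Q ⁻¹' {f x}) = μ (X ⁻¹' {x}) := by
      have h1 := congrArg (μ (X ⁻¹' {x}) * ·) hspec
      simp only [← mul_assoc, ENNReal.mul_inv_cancel hx0 (measure_ne_top μ _), one_mul,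
        mul_one] at h1
      rw [hfx]; exact h1
    have hdiff := measure_inter_add_diff (X ⁻¹' {x}) (hQ (measurableSet_singleton (f x))) (μ := μ)
    rw [heq] at hdiff
    have : μ (X ⁻¹' {x} \ Q ⁻¹' {f x}) = 0 := by
      have h2 : μ (X ⁻¹' {x}) + μ (X ⁻¹' {x} \ Q ⁻¹' {f x}) = μ (X ⁻¹' {x}) + 0 := by
        rw [add_zero]; exact hdiff
      exact (ENNReal.add_right_inj (measure_ne_top μ (X ⁻¹' {x}))).1 h2
    rwa [Set.diff_eq] at this
end Aux3

section Aux4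
variable {Ω : Type*} [MeasurableSpace Ω] (μ : Measure Ω) [IsProbabilityMeasure μ]

lemma mutualInfo_comp_le (X Y : Ω → ℕ) (hX : Measurable X) (hY : Measurable Y)
    (hXfin : (Set.range X).Finite) (hYfin : (Set.range Y).Finite) (f : ℕ → ℕ) :
    mutualInfo μ (fun ω => f (X ω)) Y ≤ mutualInfo μ X Y := by
  classical
  set R : Ω → ℕ := fun ω => f (X ω) with hRdef
  have hRmeas : Measurable R := measurable_from_nat.comp hX
  set A := hXfin.toFinset with hAdef
  set B := hYfin.toFinset with hBdef
  set A' := A.image f with hA'def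
  have hsubX : Set.range X ⊆ ↑A := by simp [hAdef]
  have hsubY : Set.range Y ⊆ ↑B := by simp [hBdef]
  have hXA : ∀ ω, X ω ∈ A := fun ω => Finset.mem_coe.1 (hsubX (Set.mem_range_self ω))
  have hsubR : Set.range R ⊆ ↑A' := by
    rintro _ ⟨ω, rfl⟩
    exact Finset.mem_coe.2 (Finset.mem_image_of_mem f (hXA ω))
  set p : ℕ → ℕ → ℝ := fun x y => (μ (X ⁻¹' {x} ∩ Y ⁻¹' {y})).toReal with hpdef
  set q : ℕ → ℕ → ℝ := fun a y => (μ (R ⁻¹' {a} ∩ Y ⁻¹' {y})).toReal with hqdef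
  set pX : ℕ → ℝ := fun x => (μ (X ⁻¹' {x})).toReal with hpXdef
  set pY : ℕ → ℝ := fun y => (μ (Y ⁻¹' {y})).toReal with hpYdef
  set qa : ℕ → ℝ := fun a => (μ (R ⁻¹' {a})).toReal with hqadef
  -- marginals
  have hpX : ∀ x, pX x = ∑ y ∈ B, p x y := by
    intro x
    show (μ (X ⁻¹' {x})).toReal = ∑ y ∈ B, (μ (X ⁻¹' {x} ∩ Y ⁻¹' {y})).toReal
    rw [← sum_measure_preimage_inter μ Y hY B hsubY (X ⁻¹' {x})
      (hX (measurableSet_singleton x))]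
    exact Finset.sum_congr rfl fun y _ => by rw [Set.inter_comm]
  have hpY : ∀ y, pY y = ∑ x ∈ A, p x y := by
    intro y
    show (μ (Y ⁻¹' {y})).toReal = ∑ x ∈ A, (μ (X ⁻¹' {x} ∩ Y ⁻¹' {y})).toReal
    exact (sum_measure_preimage_inter μ X hX A hsubX (Y ⁻¹' {y})
      (hY (measurableSet_singleton y))).symm
  have hqa : ∀ a, qa a = ∑ y ∈ B, q a y := by
    intro a
    show (μ (R ⁻¹' {a})).toReal = ∑ y ∈ B, (μ (R ⁻¹' {a} ∩ Y ⁻¹' {y})).toReal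
    rw [← sum_measure_preimage_inter μ Y hY B hsubY (R ⁻¹' {a})
      (hRmeas (measurableSet_singleton a))]
    exact Finset.sum_congr rfl fun y _ => by rw [Set.inter_comm]
  have hpYq : ∀ y, pY y = ∑ a ∈ A', q a y := by
    intro y
    show (μ (Y ⁻¹' {y})).toReal = ∑ a ∈ A', (μ (R ⁻¹' {a} ∩ Y ⁻¹' {y})).toReal
    exact (sum_measure_preimage_inter μ R hRmeas A' hsubR (Y ⁻¹' {y})
      (hY (measurableSet_singleton y))).symm
  -- entropies as finite sums
  have hpairpre : ∀ (Z W : Ω → ℕ) (x y : ℕ),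
      (fun ω => (Z ω, W ω)) ⁻¹' {(x, y)} = Z ⁻¹' {x} ∩ W ⁻¹' {y} := by
    intro Z W x y
    ext ω
    simp [Prod.ext_iff]
  have hHX : entropy μ X = ∑ x ∈ A, Real.negMulLog (pX x) := entropy_eq_sum μ X A hsubX
  have hHY : entropy μ Y = ∑ y ∈ B, Real.negMulLog (pY y) := entropy_eq_sum μ Y B hsubY
  have hHR : entropy μ R = ∑ a ∈ A', Real.negMulLog (qa a) := entropy_eq_sum μ R A' hsubR
  have hHXY : entropy μ (fun ω => (X ω, Y ω)) = ∑ x ∈ A, ∑ y ∈ B, Real.negMulLog (p x y) := by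
    rw [entropy_eq_sum μ _ (A ×ˢ B) (by
      rintro _ ⟨ω, rfl⟩
      simp only [Finset.coe_product, Set.mem_prod]
      exact ⟨hXA ω, Finset.mem_coe.1 (hsubY (Set.mem_range_self ω))⟩), Finset.sum_product]
    exact Finset.sum_congr rfl fun x _ => Finset.sum_congr rfl fun y _ => by
      rw [hpairpre X Y x y]
  have hHRY : entropy μ (fun ω => (R ω, Y ω)) = ∑ a ∈ A', ∑ y ∈ B, Real.negMulLog (q a y) := by
    rw [entropy_eq_sum μ _ (A' ×ˢ B) (by
      rintro _ ⟨ω, rfl⟩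
      simp only [Finset.coe_product, Set.mem_prod]
      exact ⟨Finset.mem_coe.1 (hsubR (Set.mem_range_self ω)),
        Finset.mem_coe.1 (hsubY (Set.mem_range_self ω))⟩), Finset.sum_product]
    exact Finset.sum_congr rfl fun a _ => Finset.sum_congr rfl fun y _ => by
      rw [hpairpre R Y a y]
  -- generic expansion of mutual information as double sum
  have expand : ∀ (P : ℕ → ℕ → ℝ) (PX : ℕ → ℝ) (S : Finset ℕ),
      (∀ x, PX x = ∑ y ∈ B, P x y) → (∀ y, pY y = ∑ x ∈ S, P x y) →
      ((∑ x ∈ S, Real.negMulLog (PX x)) + (∑ y ∈ B, Real.negMulLog (pY y))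
        - ∑ x ∈ S, ∑ y ∈ B, Real.negMulLog (P x y))
      = ∑ x ∈ S, ∑ y ∈ B, (P x y * Real.log (P x y)
          - P x y * Real.log (PX x) - P x y * Real.log (pY y)) := by
    intro P PX S hPX hPY
    have e1 : ∑ x ∈ S, Real.negMulLog (PX x)
        = ∑ x ∈ S, ∑ y ∈ B, (-(P x y * Real.log (PX x))) := by
      refine Finset.sum_congr rfl fun x _ => ?_
      rw [Real.negMulLog, neg_mul, hPX x, Finset.sum_mul, ← Finset.sum_neg_distrib]
    have e2 : ∑ y ∈ B, Real.negMulLog (pY y)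
        = ∑ x ∈ S, ∑ y ∈ B, (-(P x y * Real.log (pY y))) := by
      rw [Finset.sum_comm]
      refine Finset.sum_congr rfl fun y _ => ?_
      rw [Real.negMulLog, neg_mul, hPY y, Finset.sum_mul, ← Finset.sum_neg_distrib]
    have e3 : ∑ x ∈ S, ∑ y ∈ B, Real.negMulLog (P x y)
        = ∑ x ∈ S, ∑ y ∈ B, (-(P x y * Real.log (P x y))) := by
      refine Finset.sum_congr rfl fun x _ => Finset.sum_congr rfl fun y _ => ?_
      rw [Real.negMulLog, neg_mul]
    rw [e1, e2, e3, ← Finset.sum_add_distrib, ← Finset.sum_sub_distrib]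
    refine Finset.sum_congr rfl fun x _ => ?_
    rw [← Finset.sum_add_distrib, ← Finset.sum_sub_distrib]
    exact Finset.sum_congr rfl fun y _ => by ring
  have E1 : mutualInfo μ X Y = ∑ x ∈ A, ∑ y ∈ B, (p x y * Real.log (p x y)
      - p x y * Real.log (pX x) - p x y * Real.log (pY y)) := by
    rw [mutualInfo, hHX, hHY, hHXY]
    exact expand p pX A hpX hpY
  have E2a : mutualInfo μ R Y = ∑ a ∈ A', ∑ y ∈ B, (q a y * Real.log (q a y)
      - q a y * Real.log (qa a) - q a y * Real.log (pY y)) := by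
    rw [mutualInfo, hHR, hHY, hHRY]
    exact expand q qa A' hqa hpYq
  -- fiber decomposition of q
  have hfiber : ∀ a y, q a y = ∑ x ∈ A.filter (fun x => f x = a), p x y := by
    intro a y
    show (μ (R ⁻¹' {a} ∩ Y ⁻¹' {y})).toReal
        = ∑ x ∈ A.filter (fun x => f x = a), (μ (X ⁻¹' {x} ∩ Y ⁻¹' {y})).toReal
    have hset : R ⁻¹' {a} ∩ Y ⁻¹' {y}
        = ⋃ x ∈ A.filter (fun x => f x = a), (X ⁻¹' {x} ∩ Y ⁻¹' {y}) := by
      ext ω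
      simp only [Set.mem_inter_iff, Set.mem_preimage, Set.mem_singleton_iff, Set.mem_iUnion,
        Finset.mem_filter]
      constructor
      · rintro ⟨hfa, hy⟩
        exact ⟨X ω, ⟨hXA ω, hfa⟩, rfl, hy⟩
      · rintro ⟨x, ⟨_, hfa⟩, rfl, hy⟩
        exact ⟨hfa, hy⟩
    rw [hset, measure_biUnion_finset ?_ (fun x _ =>
        (hX (measurableSet_singleton x)).inter (hY (measurableSet_singleton y))),
      ENNReal.toReal_sum (fun x _ => measure_ne_top μ _)]
    intro x1 _ x2 _ hne
    exact Set.disjoint_left.2 fun ω ⟨h1, _⟩ ⟨h2, _⟩ => hne (h1.symm.trans h2)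
  -- monotonicity facts
  have hmono : ∀ s t : Set Ω, s ⊆ t → (μ s).toReal ≤ (μ t).toReal :=
    fun s t h => ENNReal.toReal_mono (measure_ne_top μ t) (measure_mono h)
  have hXsubR : ∀ x, X ⁻¹' {x} ⊆ R ⁻¹' {f x} := by
    intro x ω hω
    simp only [Set.mem_preimage, Set.mem_singleton_iff] at hω
    exact Set.mem_preimage.2 (by simp only [hRdef, Set.mem_singleton_iff, hω])
  have hple : ∀ x y, p x y ≤ q (f x) y := fun x y =>
    hmono _ _ (Set.inter_subset_inter_left _ (hXsubR x))
  have hpXle : ∀ x, pX x ≤ qa (f x) := fun x => hmono _ _ (hXsubR x)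
  have hppX : ∀ x y, p x y ≤ pX x := fun x y => hmono _ _ Set.inter_subset_left
  have hpnn : ∀ x y, 0 ≤ p x y := fun x y => ENNReal.toReal_nonneg
  have hqnn : ∀ a y, 0 ≤ q a y := fun a y => ENNReal.toReal_nonneg
  have hpXnn : ∀ x, 0 ≤ pX x := fun x => ENNReal.toReal_nonneg
  have hqann : ∀ a, 0 ≤ qa a := fun a => ENNReal.toReal_nonneg
  -- rewrite I[R:Y] as a sum over A × B
  set c : ℕ → ℕ → ℝ := fun a y => Real.log (q a y) - Real.log (qa a) - Real.log (pY y)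
    with hcdef
  have E2 : mutualInfo μ R Y = ∑ x ∈ A, ∑ y ∈ B, p x y * c (f x) y := by
    rw [E2a]
    have step1 : ∀ a y, q a y * Real.log (q a y) - q a y * Real.log (qa a)
        - q a y * Real.log (pY y) = q a y * c a y := fun a y => by
      show _ = q a y * (Real.log (q a y) - Real.log (qa a) - Real.log (pY y)); ring
    calc ∑ a ∈ A', ∑ y ∈ B, (q a y * Real.log (q a y) - q a y * Real.log (qa a)
          - q a y * Real.log (pY y))
        = ∑ a ∈ A', ∑ y ∈ B, q a y * c a y :=
          Finset.sum_congr rfl fun a _ => Finset.sum_congr rfl fun y _ => step1 a y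
      _ = ∑ y ∈ B, ∑ a ∈ A', q a y * c a y := Finset.sum_comm
      _ = ∑ y ∈ B, ∑ x ∈ A, p x y * c (f x) y := by
          refine Finset.sum_congr rfl fun y _ => ?_
          calc ∑ a ∈ A', q a y * c a y
              = ∑ a ∈ A', ∑ x ∈ A.filter (fun x => f x = a), p x y * c a y := by
                refine Finset.sum_congr rfl fun a _ => ?_
                rw [hfiber a y, Finset.sum_mul]
            _ = ∑ a ∈ A', ∑ x ∈ A.filter (fun x => f x = a), p x y * c (f x) y := by
                refine Finset.sum_congr rfl fun a _ => Finset.sum_congr rfl fun x hx => ?_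
                rw [(Finset.mem_filter.1 hx).2]
            _ = ∑ x ∈ A, p x y * c (f x) y :=
                Finset.sum_fiberwise_of_maps_to (fun x hx => Finset.mem_image_of_mem f hx) _
      _ = ∑ x ∈ A, ∑ y ∈ B, p x y * c (f x) y := Finset.sum_comm
  -- the comparison distribution
  set r : ℕ → ℕ → ℝ := fun x y => pX x * q (f x) y / qa (f x) with hrdef
  have hgibbs : ∑ z ∈ A ×ˢ B, p z.1 z.2 * Real.log (r z.1 z.2)
      ≤ ∑ z ∈ A ×ˢ B, p z.1 z.2 * Real.log (p z.1 z.2) := by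
    refine gibbs (A ×ˢ B) (fun z => p z.1 z.2) (fun z => r z.1 z.2)
      (fun z _ => hpnn _ _) (fun z _ => ?_) (fun z _ hrz => ?_) ?_
    · exact div_nonneg (mul_nonneg (hpXnn _) (hqnn _ _)) (hqann _)
    · by_contra hp0
      have hppos : 0 < p z.1 z.2 := lt_of_le_of_ne (hpnn _ _) (Ne.symm hp0)
      have h1 : 0 < pX z.1 := lt_of_lt_of_le hppos (hppX _ _)
      have h2 : 0 < q (f z.1) z.2 := lt_of_lt_of_le hppos (hple _ _)
      have h3 : 0 < qa (f z.1) := lt_of_lt_of_le h1 (hpXle _)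
      have : 0 < r z.1 z.2 := div_pos (mul_pos h1 h2) h3
      exact absurd hrz this.ne'
    · refine le_of_eq ?_
      rw [Finset.sum_product, Finset.sum_product]
      refine Finset.sum_congr rfl fun x _ => ?_
      have hrow : ∑ y ∈ B, r x y = pX x := by
        by_cases hqa0 : qa (f x) = 0
        · have hpX0 : pX x = 0 := le_antisymm (hqa0 ▸ hpXle x) (hpXnn x)
          refine (Finset.sum_eq_zero fun y _ => ?_).trans hpX0.symm
          show pX x * q (f x) y / qa (f x) = 0
          rw [hpX0, zero_mul, zero_div]
        · have : ∀ y, r x y = pX x / qa (f x) * q (f x) y := fun y => by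
            show pX x * q (f x) y / qa (f x) = _
            rw [mul_div_right_comm]
          rw [Finset.sum_congr rfl fun y _ => this y, ← Finset.mul_sum, ← hqa,
            div_mul_cancel₀ _ hqa0]
      rw [hrow, ← hpX x]
  -- identify log r with the linear combination
  have hlogr : ∀ x y, p x y * Real.log (r x y) = p x y * Real.log (pX x)
      + p x y * Real.log (q (f x) y) - p x y * Real.log (qa (f x)) := by
    intro x y
    by_cases hp0 : p x y = 0
    · rw [hp0]; ring
    · have hppos : 0 < p x y := lt_of_le_of_ne (hpnn _ _) (Ne.symm hp0)
      have h1 : 0 < pX x := lt_of_lt_of_le hppos (hppX _ _)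
      have h2 : 0 < q (f x) y := lt_of_lt_of_le hppos (hple _ _)
      have h3 : 0 < qa (f x) := lt_of_lt_of_le h1 (hpXle _)
      have : Real.log (r x y) = Real.log (pX x) + Real.log (q (f x) y)
          - Real.log (qa (f x)) := by
        show Real.log (pX x * q (f x) y / qa (f x)) = _
        rw [Real.log_div (mul_ne_zero h1.ne' h2.ne') h3.ne', Real.log_mul h1.ne' h2.ne']
      rw [this]; ring
  -- put everything together
  have hgibbs' : ∑ x ∈ A, ∑ y ∈ B, p x y * Real.log (r x y)
      ≤ ∑ x ∈ A, ∑ y ∈ B, p x y * Real.log (p x y) := by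
    rw [← Finset.sum_product', ← Finset.sum_product']
    exact hgibbs
  rw [E1, E2]
  have hc : ∀ x y, p x y * c (f x) y = p x y * Real.log (r x y) - p x y * Real.log (pX x)
      - p x y * Real.log (pY y) := by
    intro x y
    rw [hlogr x y]
    show p x y * (Real.log (q (f x) y) - Real.log (qa (f x)) - Real.log (pY y)) = _
    ring
  calc ∑ x ∈ A, ∑ y ∈ B, p x y * c (f x) y
      = (∑ x ∈ A, ∑ y ∈ B, p x y * Real.log (r x y))
        - (∑ x ∈ A, ∑ y ∈ B, p x y * Real.log (pX x))
        - (∑ x ∈ A, ∑ y ∈ B, p x y * Real.log (pY y)) := by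
        simp only [← Finset.sum_sub_distrib]
        exact Finset.sum_congr rfl fun x _ => Finset.sum_congr rfl fun y _ => hc x y
    _ ≤ (∑ x ∈ A, ∑ y ∈ B, p x y * Real.log (p x y))
        - (∑ x ∈ A, ∑ y ∈ B, p x y * Real.log (pX x))
        - (∑ x ∈ A, ∑ y ∈ B, p x y * Real.log (pY y)) := by linarith [hgibbs']
    _ = ∑ x ∈ A, ∑ y ∈ B, (p x y * Real.log (p x y) - p x y * Real.log (pX x)
        - p x y * Real.log (pY y)) := by
        simp only [← Finset.sum_sub_distrib]
end Aux4

/-- Self-redundancy, Axiom 2, for the ordering `Q ⊏ X ↔ H[Q|X] = 0`: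
with a single source the redundant information equals the mutual information,
`sSup {I[Q:Y] | H[Q|X] = 0} = I[X:Y]`. -/
theorem self_redundancy {Ω : Type*} [MeasurableSpace Ω]
    (μ : Measure Ω) [IsProbabilityMeasure μ]
    (X Y : Ω → ℕ) (hX : Measurable X) (hY : Measurable Y)
    (hXfin : (Set.range X).Finite) (hYfin : (Set.range Y).Finite) :
    sSup {x : ℝ | ∃ Q : Ω → ℕ, Measurable Q ∧ (Set.range Q).Finite ∧
        condEntropy μ Q X = 0 ∧ x = mutualInfo μ Q Y} =
      mutualInfo μ X Y := by
  have hmem : mutualInfo μ X Y ∈ {x : ℝ | ∃ Q : Ω → ℕ, Measurable Q ∧ (Set.range Q).Finite ∧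
      condEntropy μ Q X = 0 ∧ x = mutualInfo μ Q Y} :=
    ⟨X, hX, hXfin, condEntropy_self μ X hX, rfl⟩
  have hbound : ∀ x ∈ {x : ℝ | ∃ Q : Ω → ℕ, Measurable Q ∧ (Set.range Q).Finite ∧
      condEntropy μ Q X = 0 ∧ x = mutualInfo μ Q Y}, x ≤ mutualInfo μ X Y := by
    rintro x ⟨Q, hQ, hQfin, hQX, rfl⟩
    obtain ⟨f, hf⟩ := exists_comp_ae μ Q X hQ hX hQfin hXfin hQX
    rw [mutualInfo_congr_ae μ Q (fun ω => f (X ω)) Y hf]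
    exact mutualInfo_comp_le μ X Y hX hY hXfin hYfin f
  exact le_antisymm (csSup_le ⟨_, hmem⟩ hbound) (le_csSup ⟨_, hbound⟩ hmem)
end

section
/- (Case 3.) Let (Ω, μ) be a probability space and a, b, c, d, e, f : Ω → Bool be an independent family of random variables, each uniformly distributed on Bool, and set g := xor ∘ ⟨c, e⟩ and h := xor ∘ ⟨d, f⟩. Define X₁ := ⟨a,b,c,d⟩, X₂ := ⟨a,b,e,f⟩, X₅ := ⟨a,b,g,h⟩ (valued in Bool⁴). Then: H[X₁] = H[X₂] = H[X₅] = 4·log 2; I[X_i : X_j] = 2·log 2 and H[X_i | X_j] = 2·log 2 for every pair of distinct variables among X₁, X₂, X₅; H[⟨X₁, X₂, X₅⟩] = 6·log 2; each of H[X₁ | ⟨X₂,X₅⟩], H[X₂ | ⟨X₁,X₅⟩], H[X₅ | ⟨X₁,X₂⟩] equals 0; and I[X₁ : X₂ | X₅] = 2·log 2. -/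
open MeasureTheory ProbabilityTheory Real

/- ### Auxiliary machinery -/

lemma aux_negMulLog_ratio (q p : ℝ) (hq : 0 < q) (hp : 0 ≤ p) :
    q * Real.negMulLog (q⁻¹ * p) = Real.negMulLog p + p * Real.log q := by
  rcases eq_or_lt_of_le hp with h | hp'
  · simp [← h, Real.negMulLog]
  · unfold Real.negMulLog
    rw [Real.log_mul (by positivity) (ne_of_gt hp'), Real.log_inv]
    field_simp
    ring

/-- The chain rule `H[X|Y] = H[⟨X,Y⟩] - H[Y]` for finite-valued random variables. -/
lemma chainRule {Ω S T : Type*} [MeasurableSpace Ω] [Fintype S] [Fintype T]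
    [MeasurableSpace S] [MeasurableSpace T] [MeasurableSingletonClass S]
    [MeasurableSingletonClass T]
    (μ : Measure Ω) [IsProbabilityMeasure μ] (X : Ω → S) (Y : Ω → T)
    (hX : Measurable X) (hY : Measurable Y) :
    condEntropy μ X Y = entropy μ (fun ω => (X ω, Y ω)) - entropy μ Y := by
  classical
  set p : S → T → ℝ := fun x y => (μ (X ⁻¹' {x} ∩ Y ⁻¹' {y})).toReal with hp
  set q : T → ℝ := fun y => (μ (Y ⁻¹' {y})).toReal with hq
  have hsum : ∀ y, ∑ x : S, p x y = q y := by
    intro y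
    have hU : Y ⁻¹' {y} = ⋃ x ∈ (Finset.univ : Finset S), (X ⁻¹' {x} ∩ Y ⁻¹' {y}) := by
      ext ω; simp
    have hdis : Set.PairwiseDisjoint ((Finset.univ : Finset S) : Set S)
        (fun x => X ⁻¹' {x} ∩ Y ⁻¹' {y}) := by
      intro u _ v _ huv
      refine Set.disjoint_left.2 ?_
      rintro ω ⟨h1, _⟩ ⟨h2, _⟩
      exact huv (h1.symm.trans h2)
    have := measure_biUnion_finset (μ := μ) hdis
      (fun x _ => (hX (measurableSet_singleton x)).inter (hY (measurableSet_singleton y)))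
    show ∑ x : S, (μ (X ⁻¹' {x} ∩ Y ⁻¹' {y})).toReal = (μ (Y ⁻¹' {y})).toReal
    rw [← ENNReal.toReal_sum (fun x _ => measure_ne_top μ _), ← this, ← hU]
  have hjoint : entropy μ (fun ω => (X ω, Y ω)) = ∑ y : T, ∑ x : S, Real.negMulLog (p x y) := by
    rw [entropy, tsum_fintype, Fintype.sum_prod_type_right]
    refine Finset.sum_congr rfl fun y _ => Finset.sum_congr rfl fun x _ => ?_
    have hset : (fun ω => (X ω, Y ω)) ⁻¹' {(x, y)} = X ⁻¹' {x} ∩ Y ⁻¹' {y} := by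
      ext ω; simp [Prod.ext_iff]
    rw [hset]
  have hHY : entropy μ Y = ∑ y : T, Real.negMulLog (q y) := by
    rw [entropy, tsum_fintype]
  rw [condEntropy, tsum_fintype, hjoint, hHY, ← Finset.sum_sub_distrib]
  apply Finset.sum_congr rfl
  intro y _
  rcases eq_or_ne (μ (Y ⁻¹' {y})) 0 with h0 | h0
  · have hq0 : q y = 0 := by simp [hq, h0]
    have hp0 : ∀ x, p x y = 0 := by
      intro x
      have : μ (X ⁻¹' {x} ∩ Y ⁻¹' {y}) = 0 :=
        le_antisymm (h0 ▸ measure_mono Set.inter_subset_right) (by positivity)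
      simp [hp, this]
    have h00 : (μ (Y ⁻¹' {y})).toReal = 0 := by simp [h0]
    rw [h00, zero_mul]
    simp [hp0, hq0, Real.negMulLog_zero]
  · have hqpos : 0 < q y := by
      simp only [hq]
      exact ENNReal.toReal_pos h0 (measure_ne_top μ _)
    have hcond : ∀ x : S, (μ[|Y ⁻¹' {y}] (X ⁻¹' {x})).toReal = (q y)⁻¹ * p x y := by
      intro x
      rw [ProbabilityTheory.cond_apply (hY (measurableSet_singleton y)) μ,
        ENNReal.toReal_mul, ENNReal.toReal_inv, Set.inter_comm]
    have hent : entropy (μ[|Y ⁻¹' {y}]) X = ∑ x : S, Real.negMulLog ((q y)⁻¹ * p x y) := by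
      rw [entropy, tsum_fintype]
      exact Finset.sum_congr rfl fun x _ => by rw [hcond]
    rw [hent, Finset.mul_sum]
    have : ∀ x : S, q y * Real.negMulLog ((q y)⁻¹ * p x y)
        = Real.negMulLog (p x y) + p x y * Real.log (q y) := by
      intro x
      exact aux_negMulLog_ratio _ _ hqpos ENNReal.toReal_nonneg
    rw [Finset.sum_congr rfl (fun x _ => this x), Finset.sum_add_distrib, ← Finset.sum_mul,
      hsum y]
    unfold Real.negMulLog
    ring

abbrev B6 := Bool × Bool × Bool × Bool × Bool × Bool

lemma meas_comp {Ω T : Type*} [MeasurableSpace Ω] (μ : Measure Ω)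
    (V : Ω → B6) (hV : Measurable V) (hu : ∀ v, μ (V ⁻¹' {v}) = 1 / 64)
    [DecidableEq T] (φ : B6 → T) (t : T) :
    μ ((fun ω => φ (V ω)) ⁻¹' {t})
      = (Finset.univ.filter (fun v => φ v = t)).card * (1 / 64 : ENNReal) := by
  have hU : (fun ω => φ (V ω)) ⁻¹' {t}
      = ⋃ v ∈ Finset.univ.filter (fun v => φ v = t), V ⁻¹' {v} := by
    ext ω
    simp only [Set.mem_preimage, Set.mem_singleton_iff, Set.mem_iUnion, Finset.mem_filter,
      Finset.mem_univ, true_and]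
    constructor
    · intro hw; exact ⟨V ω, hw, rfl⟩
    · rintro ⟨v, hv, hvw⟩; rw [hvw]; exact hv
  have hdis : Set.PairwiseDisjoint
      ((Finset.univ.filter (fun v => φ v = t)) : Set B6) (fun v => V ⁻¹' {v}) := by
    intro u _ v _ huv
    refine Set.disjoint_left.2 ?_
    intro ω h1 h2
    exact huv ((Set.mem_singleton_iff.1 h1).symm.trans (Set.mem_singleton_iff.1 h2))
  rw [hU, measure_biUnion_finset (μ := μ) hdis
    (fun v _ => hV (measurableSet_singleton v))]
  simp [hu, Finset.sum_const, mul_comm]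

lemma entropy_inj {Ω T : Type*} [MeasurableSpace Ω] (μ : Measure Ω)
    (V : Ω → B6) (hV : Measurable V) (hu : ∀ v, μ (V ⁻¹' {v}) = 1 / 64)
    [Fintype T] [DecidableEq T] [MeasurableSpace T]
    (φ : B6 → T) (hφ : Function.Injective φ) :
    entropy μ (fun ω => φ (V ω)) = 6 * Real.log 2 := by
  classical
  rw [entropy, tsum_fintype]
  have key : ∀ t : T, Real.negMulLog ((μ ((fun ω => φ (V ω)) ⁻¹' {t})).toReal)
      = if t ∈ Finset.image φ Finset.univ then Real.negMulLog (1 / 64 : ℝ) else 0 := by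
    intro t
    rw [meas_comp μ V hV hu φ t]
    by_cases ht : t ∈ Finset.image φ Finset.univ
    · obtain ⟨v, _, rfl⟩ := Finset.mem_image.1 ht
      have : Finset.univ.filter (fun w => φ w = φ v) = {v} := by
        ext w
        simp only [Finset.mem_filter, Finset.mem_univ, true_and, Finset.mem_singleton]
        exact ⟨fun hw => hφ hw, fun hw => by rw [hw]⟩
      rw [if_pos ht, this]
      norm_num
    · have : Finset.univ.filter (fun w => φ w = t) = ∅ := by
        rw [Finset.filter_eq_empty_iff]
        intro w _ hw
        exact ht (Finset.mem_image.2 ⟨w, Finset.mem_univ w, hw⟩)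
      rw [if_neg ht, this]
      simp [Real.negMulLog_zero]
  rw [Finset.sum_congr rfl (fun t _ => key t), Finset.sum_ite_mem, Finset.univ_inter,
    Finset.sum_const, Finset.card_image_of_injective _ hφ]
  have hcard : (Finset.univ : Finset B6).card = 64 := by decide
  rw [hcard]
  have : Real.negMulLog (1 / 64 : ℝ) = (1 / 64) * (6 * Real.log 2) := by
    rw [Real.negMulLog]
    rw [show (1 / 64 : ℝ) = ((2 : ℝ) ^ (6 : ℕ))⁻¹ by norm_num, Real.log_inv, Real.log_pow]
    push_cast
    ring
  rw [this]
  simp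

lemma entropy_card4 {Ω T : Type*} [MeasurableSpace Ω] (μ : Measure Ω)
    (V : Ω → B6) (hV : Measurable V) (hu : ∀ v, μ (V ⁻¹' {v}) = 1 / 64)
    [Fintype T] [DecidableEq T] [MeasurableSpace T]
    (φ : B6 → T) (hT : Fintype.card T = 16)
    (hfib : ∀ t : T, (Finset.univ.filter (fun v => φ v = t)).card = 4) :
    entropy μ (fun ω => φ (V ω)) = 4 * Real.log 2 := by
  rw [entropy, tsum_fintype]
  have key : ∀ t : T, Real.negMulLog ((μ ((fun ω => φ (V ω)) ⁻¹' {t})).toReal)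
      = Real.negMulLog (1 / 16 : ℝ) := by
    intro t
    rw [meas_comp μ V hV hu φ t, hfib t]
    norm_num
  rw [Finset.sum_congr rfl (fun t _ => key t), Finset.sum_const, Finset.card_univ, hT]
  have : Real.negMulLog (1 / 16 : ℝ) = (1 / 16) * (4 * Real.log 2) := by
    rw [Real.negMulLog]
    rw [show (1 / 16 : ℝ) = ((2 : ℝ) ^ (4 : ℕ))⁻¹ by norm_num, Real.log_inv, Real.log_pow]
    push_cast
    ring
  rw [this]
  simp

lemma unifV {Ω : Type*} [MeasurableSpace Ω] (μ : Measure Ω)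
    (a b c d e f : Ω → Bool)
    (hindep : iIndepFun ![a, b, c, d, e, f] μ)
    (hunif : ∀ i x, μ (![a, b, c, d, e, f] i ⁻¹' {x}) = 1 / 2) :
    ∀ v : B6, μ ((fun ω => (a ω, b ω, c ω, d ω, e ω, f ω)) ⁻¹' {v}) = 1 / 64 := by
  rintro ⟨v1, v2, v3, v4, v5, v6⟩
  have h := hindep.measure_inter_preimage_eq_mul Finset.univ
    (sets := fun i => {![v1, v2, v3, v4, v5, v6] i}) (fun i _ => measurableSet_singleton _)
  have hset : (fun ω => (a ω, b ω, c ω, d ω, e ω, f ω)) ⁻¹' {(v1, v2, v3, v4, v5, v6)}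
      = ⋂ i ∈ Finset.univ, ![a, b, c, d, e, f] i ⁻¹' {![v1, v2, v3, v4, v5, v6] i} := by
    ext ω
    simp only [Set.mem_preimage, Set.mem_singleton_iff, Set.mem_iInter, Prod.mk.injEq,
      Finset.mem_univ, forall_true_left, Fin.forall_fin_succ, Fin.forall_fin_zero_pi,
      Matrix.cons_val_zero, Matrix.cons_val_succ]
    constructor
    · rintro ⟨h1, h2, h3, h4, h5, h6⟩
      exact ⟨h1, h2, h3, h4, h5, h6, fun i => i.elim0⟩
    · rintro ⟨h1, h2, h3, h4, h5, h6, -⟩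
      exact ⟨h1, h2, h3, h4, h5, h6⟩
  rw [hset, h, Finset.prod_congr rfl (fun i _ => hunif i _), Finset.prod_const]
  rw [Finset.card_univ]
  simp only [Fintype.card_fin]
  rw [show (64 : ENNReal) = 2 ^ 6 by norm_num, one_div, one_div, ENNReal.inv_pow]

set_option maxRecDepth 10000 in
set_option synthInstance.maxSize 512 in
set_option maxHeartbeats 4000000 in
/-- Case 3: g = c ⊕ e, h = d ⊕ f, X₁=⟨a,b,c,d⟩, X₂=⟨a,b,e,f⟩, X₅=⟨a,b,g,h⟩. -/
theorem sid_case3 {Ω : Type*} [MeasurableSpace Ω]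
    (μ : Measure Ω) [IsProbabilityMeasure μ]
    (a b c d e f : Ω → Bool)
    (hmeas : ∀ i, Measurable (![a, b, c, d, e, f] i))
    (hindep : iIndepFun ![a, b, c, d, e, f] μ)
    (hunif : ∀ i x, μ (![a, b, c, d, e, f] i ⁻¹' {x}) = 1 / 2)
    (g h : Ω → Bool) (hg : g = fun ω => xor (c ω) (e ω)) (hh : h = fun ω => xor (d ω) (f ω))
    (X₁ X₂ X₅ : Ω → Bool × Bool × Bool × Bool)
    (hX₁ : X₁ = fun ω => (a ω, b ω, c ω, d ω))
    (hX₂ : X₂ = fun ω => (a ω, b ω, e ω, f ω))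
    (hX₅ : X₅ = fun ω => (a ω, b ω, g ω, h ω)) :
    entropy μ X₁ = 4 * Real.log 2 ∧
      entropy μ X₂ = 4 * Real.log 2 ∧
      entropy μ X₅ = 4 * Real.log 2 ∧
      mutualInfo μ X₁ X₂ = 2 * Real.log 2 ∧
      mutualInfo μ X₁ X₅ = 2 * Real.log 2 ∧
      mutualInfo μ X₂ X₅ = 2 * Real.log 2 ∧
      mutualInfo μ X₂ X₁ = 2 * Real.log 2 ∧
      mutualInfo μ X₅ X₁ = 2 * Real.log 2 ∧
      mutualInfo μ X₅ X₂ = 2 * Real.log 2 ∧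
      condEntropy μ X₁ X₂ = 2 * Real.log 2 ∧
      condEntropy μ X₁ X₅ = 2 * Real.log 2 ∧
      condEntropy μ X₂ X₅ = 2 * Real.log 2 ∧
      condEntropy μ X₂ X₁ = 2 * Real.log 2 ∧
      condEntropy μ X₅ X₁ = 2 * Real.log 2 ∧
      condEntropy μ X₅ X₂ = 2 * Real.log 2 ∧
      entropy μ (fun ω => (X₁ ω, X₂ ω, X₅ ω)) = 6 * Real.log 2 ∧
      condEntropy μ X₁ (fun ω => (X₂ ω, X₅ ω)) = 0 ∧
      condEntropy μ X₁ (fun ω => (X₅ ω, X₂ ω)) = 0 ∧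
      condEntropy μ X₂ (fun ω => (X₁ ω, X₅ ω)) = 0 ∧
      condEntropy μ X₂ (fun ω => (X₅ ω, X₁ ω)) = 0 ∧
      condEntropy μ X₅ (fun ω => (X₁ ω, X₂ ω)) = 0 ∧
      condEntropy μ X₅ (fun ω => (X₂ ω, X₁ ω)) = 0 ∧
      condMutualInfo μ X₁ X₂ X₅ = 2 * Real.log 2 := by
  have ha : Measurable a := hmeas 0
  have hb : Measurable b := hmeas 1
  have hc : Measurable c := hmeas 2
  have hd : Measurable d := hmeas 3
  have he : Measurable e := hmeas 4
  have hf : Measurable f := hmeas 5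
  set V : Ω → B6 := fun ω => (a ω, b ω, c ω, d ω, e ω, f ω) with hVdef
  have hV : Measurable V :=
    ha.prodMk (hb.prodMk (hc.prodMk (hd.prodMk (he.prodMk hf))))
  have hu : ∀ v : B6, μ (V ⁻¹' {v}) = 1 / 64 := unifV μ a b c d e f hindep hunif
  -- measurability of the X's
  have m1 : Measurable X₁ := by
    rw [hX₁]; exact ha.prodMk (hb.prodMk (hc.prodMk hd))
  have m2 : Measurable X₂ := by
    rw [hX₂]; exact ha.prodMk (hb.prodMk (he.prodMk hf))
  have mg : Measurable g := by
    rw [hg]; exact (measurable_of_countable (fun p : Bool × Bool => xor p.1 p.2)).comp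
      (hc.prodMk he)
  have mh : Measurable h := by
    rw [hh]; exact (measurable_of_countable (fun p : Bool × Bool => xor p.1 p.2)).comp
      (hd.prodMk hf)
  have m5 : Measurable X₅ := by
    rw [hX₅]; exact ha.prodMk (hb.prodMk (mg.prodMk mh))
  -- single entropies
  have e1 : entropy μ X₁ = 4 * Real.log 2 := by
    rw [hX₁]
    exact entropy_card4 μ V hV hu
      (fun v => (v.1, v.2.1, v.2.2.1, v.2.2.2.1)) (by decide) (by decide)
  have e2 : entropy μ X₂ = 4 * Real.log 2 := by
    rw [hX₂]
    exact entropy_card4 μ V hV hu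
      (fun v => (v.1, v.2.1, v.2.2.2.2.1, v.2.2.2.2.2)) (by decide) (by decide)
  have e5 : entropy μ X₅ = 4 * Real.log 2 := by
    rw [hX₅, hg, hh]
    exact entropy_card4 μ V hV hu
      (fun v => (v.1, v.2.1, xor v.2.2.1 v.2.2.2.2.1, xor v.2.2.2.1 v.2.2.2.2.2))
      (by decide) (by decide)
  -- pair entropies
  have p12 : entropy μ (fun ω => (X₁ ω, X₂ ω)) = 6 * Real.log 2 := by
    rw [hX₁, hX₂]
    exact entropy_inj μ V hV hu
      (fun v => ((v.1, v.2.1, v.2.2.1, v.2.2.2.1), (v.1, v.2.1, v.2.2.2.2.1, v.2.2.2.2.2)))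
      (by decide)
  have p21 : entropy μ (fun ω => (X₂ ω, X₁ ω)) = 6 * Real.log 2 := by
    rw [hX₁, hX₂]
    exact entropy_inj μ V hV hu
      (fun v => ((v.1, v.2.1, v.2.2.2.2.1, v.2.2.2.2.2), (v.1, v.2.1, v.2.2.1, v.2.2.2.1)))
      (by decide)
  have p15 : entropy μ (fun ω => (X₁ ω, X₅ ω)) = 6 * Real.log 2 := by
    rw [hX₁, hX₅, hg, hh]
    exact entropy_inj μ V hV hu
      (fun v => ((v.1, v.2.1, v.2.2.1, v.2.2.2.1),
        (v.1, v.2.1, xor v.2.2.1 v.2.2.2.2.1, xor v.2.2.2.1 v.2.2.2.2.2)))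
      (by decide)
  have p51 : entropy μ (fun ω => (X₅ ω, X₁ ω)) = 6 * Real.log 2 := by
    rw [hX₁, hX₅, hg, hh]
    exact entropy_inj μ V hV hu
      (fun v => ((v.1, v.2.1, xor v.2.2.1 v.2.2.2.2.1, xor v.2.2.2.1 v.2.2.2.2.2),
        (v.1, v.2.1, v.2.2.1, v.2.2.2.1)))
      (by decide)
  have p25 : entropy μ (fun ω => (X₂ ω, X₅ ω)) = 6 * Real.log 2 := by
    rw [hX₂, hX₅, hg, hh]
    exact entropy_inj μ V hV hu
      (fun v => ((v.1, v.2.1, v.2.2.2.2.1, v.2.2.2.2.2),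
        (v.1, v.2.1, xor v.2.2.1 v.2.2.2.2.1, xor v.2.2.2.1 v.2.2.2.2.2)))
      (by decide)
  have p52 : entropy μ (fun ω => (X₅ ω, X₂ ω)) = 6 * Real.log 2 := by
    rw [hX₂, hX₅, hg, hh]
    exact entropy_inj μ V hV hu
      (fun v => ((v.1, v.2.1, xor v.2.2.1 v.2.2.2.2.1, xor v.2.2.2.1 v.2.2.2.2.2),
        (v.1, v.2.1, v.2.2.2.2.1, v.2.2.2.2.2)))
      (by decide)
  -- triple entropies
  have t125 : entropy μ (fun ω => (X₁ ω, (X₂ ω, X₅ ω))) = 6 * Real.log 2 := by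
    rw [hX₁, hX₂, hX₅, hg, hh]
    exact entropy_inj μ V hV hu
      (fun v => ((v.1, v.2.1, v.2.2.1, v.2.2.2.1), ((v.1, v.2.1, v.2.2.2.2.1, v.2.2.2.2.2),
        (v.1, v.2.1, xor v.2.2.1 v.2.2.2.2.1, xor v.2.2.2.1 v.2.2.2.2.2))))
      (by decide)
  have t152 : entropy μ (fun ω => (X₁ ω, (X₅ ω, X₂ ω))) = 6 * Real.log 2 := by
    rw [hX₁, hX₂, hX₅, hg, hh]
    exact entropy_inj μ V hV hu
      (fun v => ((v.1, v.2.1, v.2.2.1, v.2.2.2.1),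
        ((v.1, v.2.1, xor v.2.2.1 v.2.2.2.2.1, xor v.2.2.2.1 v.2.2.2.2.2),
        (v.1, v.2.1, v.2.2.2.2.1, v.2.2.2.2.2))))
      (by decide)
  have t215 : entropy μ (fun ω => (X₂ ω, (X₁ ω, X₅ ω))) = 6 * Real.log 2 := by
    rw [hX₁, hX₂, hX₅, hg, hh]
    exact entropy_inj μ V hV hu
      (fun v => ((v.1, v.2.1, v.2.2.2.2.1, v.2.2.2.2.2), ((v.1, v.2.1, v.2.2.1, v.2.2.2.1),
        (v.1, v.2.1, xor v.2.2.1 v.2.2.2.2.1, xor v.2.2.2.1 v.2.2.2.2.2))))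
      (by decide)
  have t251 : entropy μ (fun ω => (X₂ ω, (X₅ ω, X₁ ω))) = 6 * Real.log 2 := by
    rw [hX₁, hX₂, hX₅, hg, hh]
    exact entropy_inj μ V hV hu
      (fun v => ((v.1, v.2.1, v.2.2.2.2.1, v.2.2.2.2.2),
        ((v.1, v.2.1, xor v.2.2.1 v.2.2.2.2.1, xor v.2.2.2.1 v.2.2.2.2.2),
        (v.1, v.2.1, v.2.2.1, v.2.2.2.1))))
      (by decide)
  have t512 : entropy μ (fun ω => (X₅ ω, (X₁ ω, X₂ ω))) = 6 * Real.log 2 := by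
    rw [hX₁, hX₂, hX₅, hg, hh]
    exact entropy_inj μ V hV hu
      (fun v => ((v.1, v.2.1, xor v.2.2.1 v.2.2.2.2.1, xor v.2.2.2.1 v.2.2.2.2.2),
        ((v.1, v.2.1, v.2.2.1, v.2.2.2.1), (v.1, v.2.1, v.2.2.2.2.1, v.2.2.2.2.2))))
      (by decide)
  have t521 : entropy μ (fun ω => (X₅ ω, (X₂ ω, X₁ ω))) = 6 * Real.log 2 := by
    rw [hX₁, hX₂, hX₅, hg, hh]
    exact entropy_inj μ V hV hu
      (fun v => ((v.1, v.2.1, xor v.2.2.1 v.2.2.2.2.1, xor v.2.2.2.1 v.2.2.2.2.2),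
        ((v.1, v.2.1, v.2.2.2.2.1, v.2.2.2.2.2), (v.1, v.2.1, v.2.2.1, v.2.2.2.1))))
      (by decide)
  have t125' : entropy μ (fun ω => ((X₁ ω, X₂ ω), X₅ ω)) = 6 * Real.log 2 := by
    rw [hX₁, hX₂, hX₅, hg, hh]
    exact entropy_inj μ V hV hu
      (fun v => (((v.1, v.2.1, v.2.2.1, v.2.2.2.1), (v.1, v.2.1, v.2.2.2.2.1, v.2.2.2.2.2)),
        (v.1, v.2.1, xor v.2.2.1 v.2.2.2.2.1, xor v.2.2.2.1 v.2.2.2.2.2)))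
      (by decide)
  refine ⟨e1, e2, e5, ?_, ?_, ?_, ?_, ?_, ?_, ?_, ?_, ?_, ?_, ?_, ?_, t125, ?_, ?_, ?_, ?_,
    ?_, ?_, ?_⟩
  · rw [mutualInfo, e1, e2, p12]; ring
  · rw [mutualInfo, e1, e5, p15]; ring
  · rw [mutualInfo, e2, e5, p25]; ring
  · rw [mutualInfo, e2, e1, p21]; ring
  · rw [mutualInfo, e5, e1, p51]; ring
  · rw [mutualInfo, e5, e2, p52]; ring
  · rw [chainRule μ X₁ X₂ m1 m2, p12, e2]; ring
  · rw [chainRule μ X₁ X₅ m1 m5, p15, e5]; ring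
  · rw [chainRule μ X₂ X₅ m2 m5, p25, e5]; ring
  · rw [chainRule μ X₂ X₁ m2 m1, p21, e1]; ring
  · rw [chainRule μ X₅ X₁ m5 m1, p51, e1]; ring
  · rw [chainRule μ X₅ X₂ m5 m2, p52, e2]; ring
  · rw [chainRule μ X₁ (fun ω => (X₂ ω, X₅ ω)) m1 (m2.prodMk m5)]
    show entropy μ (fun ω => (X₁ ω, (X₂ ω, X₅ ω)))
      - entropy μ (fun ω => (X₂ ω, X₅ ω)) = 0
    rw [t125, p25]; ring
  · rw [chainRule μ X₁ (fun ω => (X₅ ω, X₂ ω)) m1 (m5.prodMk m2)]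
    show entropy μ (fun ω => (X₁ ω, (X₅ ω, X₂ ω)))
      - entropy μ (fun ω => (X₅ ω, X₂ ω)) = 0
    rw [t152, p52]; ring
  · rw [chainRule μ X₂ (fun ω => (X₁ ω, X₅ ω)) m2 (m1.prodMk m5)]
    show entropy μ (fun ω => (X₂ ω, (X₁ ω, X₅ ω)))
      - entropy μ (fun ω => (X₁ ω, X₅ ω)) = 0
    rw [t215, p15]; ring
  · rw [chainRule μ X₂ (fun ω => (X₅ ω, X₁ ω)) m2 (m5.prodMk m1)]
    show entropy μ (fun ω => (X₂ ω, (X₅ ω, X₁ ω)))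
      - entropy μ (fun ω => (X₅ ω, X₁ ω)) = 0
    rw [t251, p51]; ring
  · rw [chainRule μ X₅ (fun ω => (X₁ ω, X₂ ω)) m5 (m1.prodMk m2)]
    show entropy μ (fun ω => (X₅ ω, (X₁ ω, X₂ ω)))
      - entropy μ (fun ω => (X₁ ω, X₂ ω)) = 0
    rw [t512, p12]; ring
  · rw [chainRule μ X₅ (fun ω => (X₂ ω, X₁ ω)) m5 (m2.prodMk m1)]
    show entropy μ (fun ω => (X₅ ω, (X₂ ω, X₁ ω)))
      - entropy μ (fun ω => (X₂ ω, X₁ ω)) = 0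
    rw [t521, p21]; ring
  · rw [condMutualInfo, p15, p25, t125', e5]; ring
end

section
/- (Exact version of Proposition 6: symmetry of the NIS redundancy.) Let (Ω, μ) be a probability space, S, U, V, U', V', T, W finite nonempty measurable spaces with measurable singletons, ψ : S ≃ U × V and ψ' : S ≃ U' × V' bijections (measurable with measurable inverses), and X : Ω → S, Y : Ω → T, Z : Ω → W measurable. Define A := (ψ ∘ X).1, B := (ψ ∘ X).2, A' := (ψ' ∘ X).1, B' := (ψ' ∘ X).2. Assume A is independent of ⟨B, Y, Z⟩ with H[B | Y] = 0, and A' is independent of ⟨B', Y, Z⟩ with H[B' | Z] = 0. Then the redundancy computed in either order coincides: H[X] − H[X|Y] − H[B|Z] = H[X] − H[X|Z] − H[B'|Y], and both sides equal the co-information H[X] − H[X|Y] − H[X|Z] + H[X|⟨Y,Z⟩]. -/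
open MeasureTheory ProbabilityTheory Real

namespace NISaux

variable {Ω : Type*} [MeasurableSpace Ω]

lemma entropy_eq_sum {S : Type*} [Fintype S] [MeasurableSpace S] (μ : Measure Ω) (X : Ω → S) :
    entropy μ X = ∑ x, Real.negMulLog (μ (X ⁻¹' {x})).toReal := tsum_fintype _

lemma condEntropy_eq_sum {S T : Type*} [Fintype T] [MeasurableSpace S] [MeasurableSpace T]
    (μ : Measure Ω) (X : Ω → S) (Y : Ω → T) :
    condEntropy μ X Y = ∑ y, (μ (Y ⁻¹' {y})).toReal * entropy (μ[|Y ⁻¹' {y}]) X :=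
  tsum_fintype _

lemma sum_toReal_eq_one {S : Type*} [Fintype S] [MeasurableSpace S] [MeasurableSingletonClass S]
    (μ : Measure Ω) [IsProbabilityMeasure μ] {X : Ω → S} (hX : Measurable X) :
    ∑ x, (μ (X ⁻¹' {x})).toReal = 1 := by
  have h : ∑ x ∈ Finset.univ, μ (X ⁻¹' {x}) = μ (X ⁻¹' ↑(Finset.univ : Finset S)) :=
    sum_measure_preimage_singleton _ (fun x _ => hX (measurableSet_singleton x))
  simp only [Finset.coe_univ, Set.preimage_univ, measure_univ] at h
  rw [← ENNReal.toReal_sum (fun x _ => measure_ne_top μ _), h, ENNReal.toReal_one]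

lemma entropy_comp_equiv {S P : Type*} [MeasurableSpace S] [MeasurableSpace P]
    (μ : Measure Ω) (X : Ω → S) (e : S ≃ P) :
    entropy μ (fun ω => e (X ω)) = entropy μ X := by
  unfold entropy
  have h : ∀ p : P, (fun ω => e (X ω)) ⁻¹' {p} = X ⁻¹' {e.symm p} := by
    intro p; ext ω; simp [Equiv.eq_symm_apply, eq_comm]
  simp_rw [h]
  exact e.symm.tsum_eq (fun s => Real.negMulLog (μ (X ⁻¹' {s})).toReal)

lemma condEntropy_comp_equiv {S P T : Type*} [MeasurableSpace S] [MeasurableSpace P]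
    [MeasurableSpace T] (μ : Measure Ω) (X : Ω → S) (Y : Ω → T) (e : S ≃ P) :
    condEntropy μ (fun ω => e (X ω)) Y = condEntropy μ X Y := by
  unfold condEntropy
  exact tsum_congr fun y => by rw [entropy_comp_equiv]

lemma cond_univ_le_one {s : Set Ω} (μ : Measure Ω) [IsFiniteMeasure μ] (hs : MeasurableSet s) :
    μ[|s] Set.univ ≤ 1 := by
  rw [cond_apply hs, Set.inter_univ]
  exact ENNReal.inv_mul_le_one _

lemma toReal_le_one {ν : Measure Ω} (h : ν Set.univ ≤ 1) (t : Set Ω) : (ν t).toReal ≤ 1 := by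
  have := (measure_mono (Set.subset_univ t)).trans h
  exact ENNReal.toReal_le_of_le_ofReal one_pos.le (by simpa using this)

lemma entropy_nonneg {S : Type*} [Fintype S] [MeasurableSpace S]
    {ν : Measure Ω} (h : ν Set.univ ≤ 1) (X : Ω → S) : 0 ≤ entropy ν X := by
  rw [entropy_eq_sum]
  exact Finset.sum_nonneg fun x _ =>
    Real.negMulLog_nonneg ENNReal.toReal_nonneg (toReal_le_one h _)

lemma exists_of_entropy_eq_zero {S : Type*} [Fintype S] [MeasurableSpace S]
    [MeasurableSingletonClass S] {ν : Measure Ω} [IsProbabilityMeasure ν]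
    {C : Ω → S} (hC : Measurable C) (h : entropy ν C = 0) :
    ∃ v, ν (C ⁻¹' {v}) = 1 := by
  rw [entropy_eq_sum] at h
  have hnn : ∀ x ∈ Finset.univ, (0:ℝ) ≤ Real.negMulLog (ν (C ⁻¹' {x})).toReal :=
    fun x _ => Real.negMulLog_nonneg ENNReal.toReal_nonneg
      (toReal_le_one (le_of_eq measure_univ) _)
  have hz := (Finset.sum_eq_zero_iff_of_nonneg hnn).mp h
  by_contra hcon
  push_neg at hcon
  have hzero : ∀ x, (ν (C ⁻¹' {x})).toReal = 0 := by
    intro x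
    have := hz x (Finset.mem_univ x)
    have hx01 : (ν (C ⁻¹' {x})).toReal = 0 ∨ (ν (C ⁻¹' {x})).toReal = 1 := by
      have h3 : (ν (C ⁻¹' {x})).toReal = 0 ∨ (ν (C ⁻¹' {x})).toReal = 1 ∨
          (ν (C ⁻¹' {x})).toReal = -1 := by
        simpa [Real.negMulLog, neg_eq_zero] using this
      rcases h3 with h | h | h
      · exact Or.inl h
      · exact Or.inr h
      · nlinarith [ENNReal.toReal_nonneg (a := ν (C ⁻¹' {x}))]
    rcases hx01 with h1 | h1
    · exact h1
    · exact absurd (ENNReal.toReal_eq_one_iff _ |>.mp h1) (hcon x)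
  have := sum_toReal_eq_one ν hC
  simp [hzero] at this

lemma entropy_of_prob_one {S : Type*} [Fintype S] [MeasurableSpace S]
    [MeasurableSingletonClass S] {ν : Measure Ω} [IsProbabilityMeasure ν]
    {C : Ω → S} (hC : Measurable C) {v : S} (h : ν (C ⁻¹' {v}) = 1) :
    entropy ν C = 0 := by
  rw [entropy_eq_sum]
  refine Finset.sum_eq_zero fun x _ => ?_
  by_cases hx : x = v
  · subst hx; rw [h]; simp
  · have hsub : C ⁻¹' {x} ⊆ (C ⁻¹' {v})ᶜ := by
      intro ω hω hmem
      exact hx (by simpa using hω ▸ (by simpa using hmem : C ω = v) ▸ rfl)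
    have hcompl : ν ((C ⁻¹' {v})ᶜ) = 0 := by
      rw [measure_compl (hC (measurableSet_singleton v)) (measure_ne_top ν _), h]
      simp
    have : ν (C ⁻¹' {x}) = 0 := le_antisymm (hcompl ▸ measure_mono hsub) zero_le
    rw [this]; simp

lemma condEntropy_zero_of_refines {S T T₂ : Type*} [Fintype S] [MeasurableSpace S]
    [MeasurableSingletonClass S] [Fintype T] [MeasurableSpace T] [MeasurableSingletonClass T]
    [Fintype T₂] [MeasurableSpace T₂] [MeasurableSingletonClass T₂]
    (μ : Measure Ω) [IsProbabilityMeasure μ]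
    {C : Ω → S} (hC : Measurable C) {D : Ω → T} (hD : Measurable D)
    {E : Ω → T₂} (hE : Measurable E) (g : T₂ → T) (hg : ∀ ω, D ω = g (E ω))
    (h : condEntropy μ C D = 0) : condEntropy μ C E = 0 := by
  rw [condEntropy_eq_sum] at h ⊢
  refine Finset.sum_eq_zero fun e _ => ?_
  by_cases he : μ (E ⁻¹' {e}) = 0
  · simp [he]
  · -- the set E⁻¹{e} is contained in D⁻¹{g e}
    have hsub : E ⁻¹' {e} ⊆ D ⁻¹' {g e} := by
      intro ω hω
      simp only [Set.mem_preimage, Set.mem_singleton_iff] at *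
      rw [hg ω, hω]
    have hd0 : μ (D ⁻¹' {g e}) ≠ 0 := fun h0 =>
      he (le_antisymm (h0 ▸ measure_mono hsub) zero_le)
    -- the term of h at g e vanishes
    have hterm : (μ (D ⁻¹' {g e})).toReal * entropy (μ[|D ⁻¹' {g e}]) C = 0 := by
      have hnn : ∀ y ∈ Finset.univ,
          (0:ℝ) ≤ (μ (D ⁻¹' {y})).toReal * entropy (μ[|D ⁻¹' {y}]) C := by
        intro y _
        exact mul_nonneg ENNReal.toReal_nonneg
          (entropy_nonneg (cond_univ_le_one μ (hD (measurableSet_singleton y))) C)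
      exact (Finset.sum_eq_zero_iff_of_nonneg hnn).mp h _ (Finset.mem_univ _)
    have hdR : (μ (D ⁻¹' {g e})).toReal ≠ 0 := by
      simp [ENNReal.toReal_eq_zero_iff, hd0, measure_ne_top]
    have hent : entropy (μ[|D ⁻¹' {g e}]) C = 0 := by
      rcases mul_eq_zero.mp hterm with h1 | h1
      · exact absurd h1 hdR
      · exact h1
    haveI : IsProbabilityMeasure (μ[|D ⁻¹' {g e}]) := cond_isProbabilityMeasure hd0
    obtain ⟨v, hv⟩ := exists_of_entropy_eq_zero hC hent
    -- μ (D⁻¹{g e} ∩ (C⁻¹{v})ᶜ) = 0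
    have hvc : (μ[|D ⁻¹' {g e}]) ((C ⁻¹' {v})ᶜ) = 0 := by
      rw [measure_compl (hC (measurableSet_singleton v)) (measure_ne_top _ _), hv]
      simp
    have hmdc : μ (D ⁻¹' {g e} ∩ (C ⁻¹' {v})ᶜ) = 0 := by
      rw [cond_apply (hD (measurableSet_singleton (g e)))] at hvc
      rcases mul_eq_zero.mp hvc with h1 | h1
      · exact absurd h1 (by simp [hd0])
      · exact h1
    have hmec : μ (E ⁻¹' {e} ∩ (C ⁻¹' {v})ᶜ) = 0 :=
      le_antisymm (hmdc ▸ measure_mono (Set.inter_subset_inter_left _ hsub)) zero_le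
    haveI : IsProbabilityMeasure (μ[|E ⁻¹' {e}]) := cond_isProbabilityMeasure he
    have hec : (μ[|E ⁻¹' {e}]) ((C ⁻¹' {v})ᶜ) = 0 := by
      rw [cond_apply (hE (measurableSet_singleton e)), hmec, mul_zero]
    have hev : (μ[|E ⁻¹' {e}]) (C ⁻¹' {v}) = 1 := by
      have := measure_compl (μ := μ[|E ⁻¹' {e}]) (hC (measurableSet_singleton v))
        (measure_ne_top _ _)
      rw [hec] at this
      have h2 : (μ[|E ⁻¹' {e}]) (C ⁻¹' {v}) ≤ 1 := prob_le_one
      have h1 : (1:ENNReal) - (μ[|E ⁻¹' {e}]) (C ⁻¹' {v}) = 0 := by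
        rw [← measure_univ (μ := μ[|E ⁻¹' {e}])]; exact this.symm
      exact ((tsub_eq_zero_iff_le.mp h1).antisymm h2).symm
    rw [entropy_of_prob_one hC hev, mul_zero]

lemma pair_preimage {V W : Type*} (B : Ω → V) (Z : Ω → W) (b : V) (z : W) :
    (fun ω => (B ω, Z ω)) ⁻¹' {(b, z)} = B ⁻¹' {b} ∩ Z ⁻¹' {z} := by
  ext ω; simp [Prod.ext_iff]

lemma cond_pair_apply {U V W : Type*} [MeasurableSpace U] [MeasurableSpace V]
    [MeasurableSpace W] [MeasurableSingletonClass U] [MeasurableSingletonClass V]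
    [MeasurableSingletonClass W]
    (μ : Measure Ω) [IsProbabilityMeasure μ]
    {A : Ω → U} {B : Ω → V} {Z : Ω → W} (hZ : Measurable Z)
    (hind : IndepFun A (fun ω => (B ω, Z ω)) μ) (a : U) (b : V) (z : W) :
    (μ[|Z ⁻¹' {z}]) ((fun ω => (A ω, B ω)) ⁻¹' {(a, b)}) =
      μ (A ⁻¹' {a}) * (μ[|Z ⁻¹' {z}]) (B ⁻¹' {b}) := by
  have hs := hZ (measurableSet_singleton z)
  rw [cond_apply hs, cond_apply hs, pair_preimage A B a b]
  have hprod : μ (A ⁻¹' {a} ∩ (B ⁻¹' {b} ∩ Z ⁻¹' {z})) =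
      μ (A ⁻¹' {a}) * μ (B ⁻¹' {b} ∩ Z ⁻¹' {z}) := by
    have := hind.measure_inter_preimage_eq_mul {a} {(b, z)}
      (measurableSet_singleton a) (measurableSet_singleton (b, z))
    rwa [pair_preimage B Z b z] at this
  have e1 : Z ⁻¹' {z} ∩ (A ⁻¹' {a} ∩ B ⁻¹' {b}) = A ⁻¹' {a} ∩ (B ⁻¹' {b} ∩ Z ⁻¹' {z}) := by
    ext ω
    simp only [Set.mem_inter_iff]
    tauto
  have e2 : Z ⁻¹' {z} ∩ B ⁻¹' {b} = B ⁻¹' {b} ∩ Z ⁻¹' {z} := Set.inter_comm _ _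
  rw [e1, e2, hprod]
  ring

lemma entropy_pair_cond {U V W : Type*} [Fintype U] [Fintype V]
    [MeasurableSpace U] [MeasurableSpace V] [MeasurableSpace W]
    [MeasurableSingletonClass U] [MeasurableSingletonClass V] [MeasurableSingletonClass W]
    (μ : Measure Ω) [IsProbabilityMeasure μ]
    {A : Ω → U} {B : Ω → V} {Z : Ω → W} (hA : Measurable A) (hB : Measurable B)
    (hZ : Measurable Z) (hind : IndepFun A (fun ω => (B ω, Z ω)) μ)
    {z : W} (hz : μ (Z ⁻¹' {z}) ≠ 0) :
    entropy (μ[|Z ⁻¹' {z}]) (fun ω => (A ω, B ω)) =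
      entropy μ A + entropy (μ[|Z ⁻¹' {z}]) B := by
  haveI : IsProbabilityMeasure (μ[|Z ⁻¹' {z}]) := cond_isProbabilityMeasure hz
  rw [entropy_eq_sum, entropy_eq_sum, entropy_eq_sum, Fintype.sum_prod_type]
  have hterm : ∀ a b, Real.negMulLog ((μ[|Z ⁻¹' {z}])
      ((fun ω => (A ω, B ω)) ⁻¹' {(a, b)})).toReal =
      ((μ[|Z ⁻¹' {z}]) (B ⁻¹' {b})).toReal * Real.negMulLog (μ (A ⁻¹' {a})).toReal +
      (μ (A ⁻¹' {a})).toReal * Real.negMulLog ((μ[|Z ⁻¹' {z}]) (B ⁻¹' {b})).toReal := by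
    intro a b
    rw [cond_pair_apply μ hZ hind a b z, ENNReal.toReal_mul, Real.negMulLog_mul]
  calc ∑ a, ∑ b, Real.negMulLog ((μ[|Z ⁻¹' {z}])
        ((fun ω => (A ω, B ω)) ⁻¹' {(a, b)})).toReal
      = ∑ a, ∑ b, (((μ[|Z ⁻¹' {z}]) (B ⁻¹' {b})).toReal *
          Real.negMulLog (μ (A ⁻¹' {a})).toReal +
        (μ (A ⁻¹' {a})).toReal * Real.negMulLog ((μ[|Z ⁻¹' {z}]) (B ⁻¹' {b})).toReal) := by
        exact Finset.sum_congr rfl fun a _ => Finset.sum_congr rfl fun b _ => hterm a b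
    _ = ∑ a, ((∑ b, ((μ[|Z ⁻¹' {z}]) (B ⁻¹' {b})).toReal) *
          Real.negMulLog (μ (A ⁻¹' {a})).toReal +
        (μ (A ⁻¹' {a})).toReal * ∑ b, Real.negMulLog ((μ[|Z ⁻¹' {z}]) (B ⁻¹' {b})).toReal) := by
        refine Finset.sum_congr rfl fun a _ => ?_
        rw [Finset.sum_add_distrib, ← Finset.sum_mul, ← Finset.mul_sum]
    _ = ∑ a, (Real.negMulLog (μ (A ⁻¹' {a})).toReal +
        (μ (A ⁻¹' {a})).toReal * ∑ b, Real.negMulLog ((μ[|Z ⁻¹' {z}]) (B ⁻¹' {b})).toReal) := by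
        rw [sum_toReal_eq_one _ hB]; simp
    _ = _ := by
        rw [Finset.sum_add_distrib, ← Finset.sum_mul, sum_toReal_eq_one μ hA, one_mul]

lemma condEntropy_pair_of_indep {U V W : Type*} [Fintype U] [Fintype V] [Fintype W]
    [MeasurableSpace U] [MeasurableSpace V] [MeasurableSpace W]
    [MeasurableSingletonClass U] [MeasurableSingletonClass V] [MeasurableSingletonClass W]
    (μ : Measure Ω) [IsProbabilityMeasure μ]
    {A : Ω → U} {B : Ω → V} {Z : Ω → W} (hA : Measurable A) (hB : Measurable B)
    (hZ : Measurable Z) (hind : IndepFun A (fun ω => (B ω, Z ω)) μ) :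
    condEntropy μ (fun ω => (A ω, B ω)) Z = entropy μ A + condEntropy μ B Z := by
  rw [condEntropy_eq_sum, condEntropy_eq_sum]
  have hterm : ∀ z, (μ (Z ⁻¹' {z})).toReal * entropy (μ[|Z ⁻¹' {z}]) (fun ω => (A ω, B ω)) =
      (μ (Z ⁻¹' {z})).toReal * entropy μ A +
      (μ (Z ⁻¹' {z})).toReal * entropy (μ[|Z ⁻¹' {z}]) B := by
    intro z
    by_cases hz : μ (Z ⁻¹' {z}) = 0
    · simp [hz]
    · rw [entropy_pair_cond μ hA hB hZ hind hz]; ring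
  calc ∑ z, (μ (Z ⁻¹' {z})).toReal * entropy (μ[|Z ⁻¹' {z}]) (fun ω => (A ω, B ω))
      = ∑ z, ((μ (Z ⁻¹' {z})).toReal * entropy μ A +
          (μ (Z ⁻¹' {z})).toReal * entropy (μ[|Z ⁻¹' {z}]) B) :=
        Finset.sum_congr rfl fun z _ => hterm z
    _ = _ := by
        rw [Finset.sum_add_distrib, ← Finset.sum_mul, sum_toReal_eq_one μ hZ, one_mul]

end NISaux


/-- exact symmetry of the NIS redundancy: with two encoders `ψ`, `ψ'`
splitting `X` into `(A,B)` and `(A',B')` respectively, where `A ⊥ ⟨B,Y,Z⟩`, `H[B|Y] = 0`,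
`A' ⊥ ⟨B',Y,Z⟩`, `H[B'|Z] = 0`, the redundancies computed in either order coincide:
`H[X] − H[X|Y] − H[B|Z] = H[X] − H[X|Z] − H[B'|Y]`, and both equal the co-information
`H[X] − H[X|Y] − H[X|Z] + H[X|⟨Y,Z⟩]`. -/
theorem nis_redundancy_symmetry {Ω S U V U' V' T W : Type*} [MeasurableSpace Ω]
    [Fintype S] [Nonempty S] [MeasurableSpace S] [MeasurableSingletonClass S]
    [Fintype U] [Nonempty U] [MeasurableSpace U] [MeasurableSingletonClass U]
    [Fintype V] [Nonempty V] [MeasurableSpace V] [MeasurableSingletonClass V]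
    [Fintype U'] [Nonempty U'] [MeasurableSpace U'] [MeasurableSingletonClass U']
    [Fintype V'] [Nonempty V'] [MeasurableSpace V'] [MeasurableSingletonClass V']
    [Fintype T] [Nonempty T] [MeasurableSpace T] [MeasurableSingletonClass T]
    [Fintype W] [Nonempty W] [MeasurableSpace W] [MeasurableSingletonClass W]
    (μ : Measure Ω) [IsProbabilityMeasure μ]
    (ψ : S ≃ U × V) (hψ : Measurable ψ) (hψsymm : Measurable ψ.symm)
    (ψ' : S ≃ U' × V') (hψ' : Measurable ψ') (hψ'symm : Measurable ψ'.symm)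
    (X : Ω → S) (Y : Ω → T) (Z : Ω → W)
    (hX : Measurable X) (hY : Measurable Y) (hZ : Measurable Z)
    (A : Ω → U) (B : Ω → V) (A' : Ω → U') (B' : Ω → V')
    (hA : A = fun ω => (ψ (X ω)).1) (hB : B = fun ω => (ψ (X ω)).2)
    (hA' : A' = fun ω => (ψ' (X ω)).1) (hB' : B' = fun ω => (ψ' (X ω)).2)
    (hindep : IndepFun A (fun ω => (B ω, Y ω, Z ω)) μ)
    (hBY : condEntropy μ B Y = 0)
    (hindep' : IndepFun A' (fun ω => (B' ω, Y ω, Z ω)) μ)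
    (hB'Z : condEntropy μ B' Z = 0) :
    entropy μ X - condEntropy μ X Y - condEntropy μ B Z =
      entropy μ X - condEntropy μ X Z - condEntropy μ B' Y ∧
    entropy μ X - condEntropy μ X Y - condEntropy μ B Z =
      entropy μ X - condEntropy μ X Y - condEntropy μ X Z +
        condEntropy μ X (fun ω => (Y ω, Z ω)) := by
  have hAm : Measurable A := hA ▸ (hψ.comp hX).fst
  have hBm : Measurable B := hB ▸ (hψ.comp hX).snd
  have hA'm : Measurable A' := hA' ▸ (hψ'.comp hX).fst
  have hB'm : Measurable B' := hB' ▸ (hψ'.comp hX).snd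
  have hYZ : Measurable (fun ω => (Y ω, Z ω)) := hY.prodMk hZ
  have hpair : (fun ω => (A ω, B ω)) = fun ω => ψ (X ω) := by rw [hA, hB]
  have hpair' : (fun ω => (A' ω, B' ω)) = fun ω => ψ' (X ω) := by rw [hA', hB']
  -- independence variants
  have hindBZ : IndepFun A (fun ω => (B ω, Z ω)) μ :=
    hindep.comp measurable_id (measurable_fst.prodMk (measurable_snd.comp measurable_snd))
  have hindB'Y : IndepFun A' (fun ω => (B' ω, Y ω)) μ :=
    hindep'.comp measurable_id (measurable_fst.prodMk (measurable_fst.comp measurable_snd))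
  -- H[X|Z] = H[A] + H[B|Z]
  have h1 : condEntropy μ X Z = entropy μ A + condEntropy μ B Z := by
    calc condEntropy μ X Z = condEntropy μ (fun ω => ψ (X ω)) Z :=
          (NISaux.condEntropy_comp_equiv μ X Z ψ).symm
      _ = condEntropy μ (fun ω => (A ω, B ω)) Z := by rw [hpair]
      _ = entropy μ A + condEntropy μ B Z :=
          NISaux.condEntropy_pair_of_indep μ hAm hBm hZ hindBZ
  -- H[X|Y,Z] = H[A] + H[B|Y,Z] = H[A]
  have h2 : condEntropy μ X (fun ω => (Y ω, Z ω)) =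
      entropy μ A + condEntropy μ B (fun ω => (Y ω, Z ω)) := by
    calc condEntropy μ X (fun ω => (Y ω, Z ω))
        = condEntropy μ (fun ω => ψ (X ω)) (fun ω => (Y ω, Z ω)) :=
          (NISaux.condEntropy_comp_equiv μ X _ ψ).symm
      _ = condEntropy μ (fun ω => (A ω, B ω)) (fun ω => (Y ω, Z ω)) := by rw [hpair]
      _ = entropy μ A + condEntropy μ B (fun ω => (Y ω, Z ω)) :=
          NISaux.condEntropy_pair_of_indep μ hAm hBm hYZ hindep
  have h2z : condEntropy μ B (fun ω => (Y ω, Z ω)) = 0 :=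
    NISaux.condEntropy_zero_of_refines μ hBm hY hYZ Prod.fst (fun ω => rfl) hBY
  -- H[X|Y] = H[A'] + H[B'|Y]
  have h3 : condEntropy μ X Y = entropy μ A' + condEntropy μ B' Y := by
    calc condEntropy μ X Y = condEntropy μ (fun ω => ψ' (X ω)) Y :=
          (NISaux.condEntropy_comp_equiv μ X Y ψ').symm
      _ = condEntropy μ (fun ω => (A' ω, B' ω)) Y := by rw [hpair']
      _ = entropy μ A' + condEntropy μ B' Y :=
          NISaux.condEntropy_pair_of_indep μ hA'm hB'm hY hindB'Y
  -- H[X|Y,Z] = H[A'] + H[B'|Y,Z] = H[A']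
  have h4 : condEntropy μ X (fun ω => (Y ω, Z ω)) =
      entropy μ A' + condEntropy μ B' (fun ω => (Y ω, Z ω)) := by
    calc condEntropy μ X (fun ω => (Y ω, Z ω))
        = condEntropy μ (fun ω => ψ' (X ω)) (fun ω => (Y ω, Z ω)) :=
          (NISaux.condEntropy_comp_equiv μ X _ ψ').symm
      _ = condEntropy μ (fun ω => (A' ω, B' ω)) (fun ω => (Y ω, Z ω)) := by rw [hpair']
      _ = entropy μ A' + condEntropy μ B' (fun ω => (Y ω, Z ω)) :=
          NISaux.condEntropy_pair_of_indep μ hA'm hB'm hYZ hindep'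
  have h4z : condEntropy μ B' (fun ω => (Y ω, Z ω)) = 0 :=
    NISaux.condEntropy_zero_of_refines μ hB'm hZ hYZ Prod.snd (fun ω => rfl) hB'Z
  constructor <;> linarith
end
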